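/- arXiv:1206.1422 — 6 statements merged into one kernel-verified Lean document; each statement's English description precedes it below -/
import Mathlib

section
/- For any distinct points p_1, …, p_n in ℝ² with a fixed stacking order, the visible perimeter of the scaled configuration is monotone in the scaling factor: for all real numbers 0 < ε ≤ ε', one has vis(εp_1, …, εp_n) ≤ vis(ε'p_1, …, ε'p_n). -/
open MeasureTheory Filter Set Metric
open scoped ENNReal NNReal Topology

noncomputable section

/-- The Euclidean plane. -/
abbrev Pt : Type := EuclideanSpace ℝ (Fin 2)

/-- The visible perimeter of the arrangement of unit disks centered at `p 0, …, p (n-1)`,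
where `p i` is stacked below `p j` whenever `i < j`: the sum over `i` of the
1-dimensional Hausdorff measure of the part of the boundary circle of the disk at `p i`
not covered by the (open) disks stacked below it. -/
def vis {n : ℕ} (p : Fin n → Pt) : ℝ≥0∞ :=
  ∑ i : Fin n, μH[1] {x : Pt | dist x (p i) = 1 ∧ ∀ j : Fin n, j < i → 1 ≤ dist x (p j)}

/- The external angles associated to the sequence of points `p 0, …, p (n-1)`:
`τ_1 = 2π`; for `i > 1`, `τ_i = 0` if `p i` lies in the convex hull of the previous
points, and otherwise `τ_i` is the arc-length measure of the set of unit vectors `u`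
with `⟨u, p i⟩ > ⟨u, p j⟩` for all `j < i`. -/
open Classical in
def extAngle {n : ℕ} (p : Fin n → Pt) (i : Fin n) : ℝ≥0∞ :=
  if (i : ℕ) = 0 then ENNReal.ofReal (2 * Real.pi)
  else if p i ∈ convexHull ℝ (p '' {j : Fin n | j < i}) then 0
  else μH[1] {u : Pt | ‖u‖ = 1 ∧ ∀ j : Fin n, j < i →
    (inner ℝ u (p j) : ℝ) < (inner ℝ u (p i) : ℝ)}

/-- `vinf n` is `v(n)`: the infimum over all sets of `n` distinct points (encoded as
injective functions `Fin n → Pt`) of the maximum visible perimeter over all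
stacking orders (enumerations). -/
def vinf (n : ℕ) : ℝ≥0∞ :=
  ⨅ (p : Fin n → Pt) (_ : Function.Injective p),
    ⨆ σ : Equiv.Perm (Fin n), vis (p ∘ σ)

/-- A set of `n` points is `C`-dense if its maximum pairwise distance is at most
`C · n^{1/2}` times its minimum (nonzero) pairwise distance. -/
def CDense {n : ℕ} (C : ℝ) (p : Fin n → Pt) : Prop :=
  ∀ i j k l : Fin n, k ≠ l →
    dist (p i) (p j) ≤ C * Real.sqrt n * dist (p k) (p l)

/- The perimeter of the convex hull of `Q`: the 1-dimensional Hausdorff measure of its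
boundary if the hull has nonempty interior, and otherwise (hull is a point or a segment)
twice its diameter (= twice its length; `0` for a point or the empty set). -/
open Classical in
def per (Q : Set Pt) : ℝ≥0∞ :=
  if (interior (convexHull ℝ Q)).Nonempty then μH[1] (frontier (convexHull ℝ Q))
  else 2 * EMetric.diam (convexHull ℝ Q)

/-- The `k × k` integer grid `{1, …, k} × {1, …, k}` in the plane. -/
def grid (k : ℕ) : Set Pt :=
  {x | ∃ a b : ℕ, 1 ≤ a ∧ a ≤ k ∧ 1 ≤ b ∧ b ≤ k ∧ x 0 = (a : ℝ) ∧ x 1 = (b : ℝ)}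

/-- monotonicity of the visible perimeter under scaling. -/
theorem visible_perimeter_monotone_in_scaling {n : ℕ} (p : Fin n → Pt)
    (hp : Function.Injective p) (ε ε' : ℝ) (hε : 0 < ε) (hεε' : ε ≤ ε') :
    vis (fun i => ε • p i) ≤ vis (fun i => ε' • p i) := by
  unfold vis
  refine Finset.sum_le_sum fun i _ => ?_
  set c : Pt := (ε' - ε) • p i with hc
  have hiso : Isometry (fun x : Pt => x + c) := Isometry.of_dist_eq fun a b => by
    simp [dist_eq_norm]
  have himg := hiso.hausdorffMeasure_image (Or.inl (by norm_num : (0:ℝ) ≤ 1))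
    {x : Pt | dist x (ε • p i) = 1 ∧ ∀ j : Fin n, j < i → 1 ≤ dist x (ε • p j)}
  rw [← himg]
  refine measure_mono ?_
  rintro y ⟨x, ⟨hx1, hx2⟩, rfl⟩
  constructor
  · rw [dist_eq_norm] at hx1 ⊢
    have : x + c - ε' • p i = x - ε • p i := by rw [hc]; module
    rw [this]; exact hx1
  · intro j hj
    have hx2j := hx2 j hj
    rw [dist_eq_norm] at hx1 hx2j ⊢
    set u : Pt := x - ε • p i with hu
    set d : Pt := p i - p j with hd
    have e1 : x - ε • p j = u + ε • d := by rw [hu, hd]; module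
    have e2 : x + c - ε' • p j = u + ε' • d := by rw [hu, hd, hc]; module
    rw [e2]
    rw [e1] at hx2j
    have q1 : ‖u + ε • d‖ ^ 2 = ‖u‖ ^ 2 + 2 * (ε * inner ℝ u d) + ε ^ 2 * ‖d‖ ^ 2 := by
      rw [norm_add_sq_real, real_inner_smul_right, norm_smul]
      simp [mul_pow, sq_abs]
    have q2 : ‖u + ε' • d‖ ^ 2 = ‖u‖ ^ 2 + 2 * (ε' * inner ℝ u d) + ε' ^ 2 * ‖d‖ ^ 2 := by
      rw [norm_add_sq_real, real_inner_smul_right, norm_smul]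
      simp [mul_pow, sq_abs]
    have h0 : 0 ≤ ε * (ε * ‖d‖ ^ 2 + 2 * inner ℝ u d) := by nlinarith [norm_nonneg (u + ε • d)]
    have h0' : 0 ≤ ε * ‖d‖ ^ 2 + 2 * inner ℝ u d := nonneg_of_mul_nonneg_right h0 hε
    have h1 : 0 ≤ ε' * ‖d‖ ^ 2 + 2 * inner ℝ u d := by nlinarith [sq_nonneg ‖d‖]
    have h2 : (1:ℝ) ≤ ‖u + ε' • d‖ ^ 2 := by nlinarith
    nlinarith [norm_nonneg (u + ε' • d)]
end
end

section
/- For every finite set of distinct points p_1, …, p_n in ℝ² with a fixed stacking order, the visible perimeter of the unscaled configuration is at least the limit superior, as ε → 0⁺, of the visible perimeter of the configuration scaled by ε: limsup_{ε→0⁺} vis(εp_1, …, εp_n) ≤ vis(p_1, …, p_n). -/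
open MeasureTheory Filter Set Metric
open scoped ENNReal NNReal Topology

noncomputable section

lemma key_norm (u d : Pt) (ε : ℝ) (hε : 0 < ε) (hε1 : ε ≤ 1)
    (hu : ‖u‖ = 1) (h : 1 ≤ ‖u + ε • d‖) : 1 ≤ ‖u + d‖ := by
  have h1 : (1:ℝ) ≤ ‖u + ε • d‖ ^ 2 := by nlinarith [norm_nonneg (u + ε • d)]
  rw [norm_add_sq_real, hu] at h1
  rw [inner_smul_right, norm_smul, Real.norm_eq_abs, abs_of_pos hε] at h1
  have h2 : 0 ≤ 2 * inner ℝ u d + ε * ‖d‖ ^ 2 := by nlinarith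
  have h3 : (1:ℝ) ≤ ‖u + d‖ ^ 2 := by
    rw [norm_add_sq_real, hu]
    nlinarith [sq_nonneg ‖d‖]
  nlinarith [norm_nonneg (u + d)]

/-- `limsup_{ε→0⁺} vis(εp) ≤ vis(p)`. -/
theorem limsup_vis_scaled_le_vis {n : ℕ} (p : Fin n → Pt) (hp : Function.Injective p) :
    Filter.limsup (fun ε : ℝ => vis (fun i => ε • p i)) (𝓝[>] (0 : ℝ)) ≤ vis p := by
  have key : ∀ ε : ℝ, ε ∈ Ioc (0:ℝ) 1 → vis (fun i => ε • p i) ≤ vis p := by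
    rintro ε ⟨hε, hε1⟩
    unfold vis
    refine Finset.sum_le_sum fun i _ => ?_
    have hiso : Isometry (fun x : Pt => x + (p i - ε • p i)) :=
      Isometry.of_dist_eq fun a b => by simp [dist_add_right]
    calc μH[1] {x : Pt | dist x (ε • p i) = 1 ∧ ∀ j : Fin n, j < i → 1 ≤ dist x (ε • p j)}
        = μH[1] ((fun x : Pt => x + (p i - ε • p i)) ''
            {x : Pt | dist x (ε • p i) = 1 ∧ ∀ j : Fin n, j < i → 1 ≤ dist x (ε • p j)}) :=
          (hiso.hausdorffMeasure_image (Or.inl zero_le_one) _).symm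
      _ ≤ μH[1] {x : Pt | dist x (p i) = 1 ∧ ∀ j : Fin n, j < i → 1 ≤ dist x (p j)} := by
          refine measure_mono ?_
          rintro y ⟨x, ⟨hx1, hx2⟩, rfl⟩
          constructor
          · change dist (x + (p i - ε • p i)) (p i) = 1
            rw [dist_eq_norm] at hx1 ⊢
            convert hx1 using 2
            abel
          · intro j hj
            change 1 ≤ dist (x + (p i - ε • p i)) (p j)
            have hx2' := hx2 j hj
            rw [dist_eq_norm] at hx2' ⊢
            have heq : x + (p i - ε • p i) - p j = (x - ε • p i) + (p i - p j) := by abel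
            have heq2 : x - ε • p j = (x - ε • p i) + ε • (p i - p j) := by
              rw [smul_sub]; abel
            rw [heq]
            refine key_norm _ _ ε hε hε1 (by rw [dist_eq_norm] at hx1; exact hx1) ?_
            rw [← heq2]; exact hx2'
  refine Filter.limsup_le_of_le (by isBoundedDefault) ?_
  have hmem : Ioc (0:ℝ) 1 ∈ 𝓝[>] (0:ℝ) := Ioc_mem_nhdsGT_of_mem ⟨le_refl _, one_pos⟩
  filter_upwards [hmem] with ε hε using key ε hε
end
end

section
/- For every finite set of distinct points p_1, …, p_n in ℝ² with a fixed stacking order, the visible perimeter of the configuration scaled by ε tends, as ε → 0⁺, to the sum ∑_{i=1}^n τ_i of the external angles; that is, vis(εp_1, …, εp_n) → ∑_{i=1}^n τ_i as ε → 0⁺. -/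
open MeasureTheory Filter Set Metric
open scoped ENNReal NNReal Topology

noncomputable section

section AuxVisProof
open Real

def circ (θ : ℝ) : Pt := (WithLp.equiv 2 (Fin 2 → ℝ)).symm ![Real.cos θ, Real.sin θ]

@[simp] lemma circ_apply0 (θ : ℝ) : circ θ 0 = Real.cos θ := rfl
@[simp] lemma circ_apply1 (θ : ℝ) : circ θ 1 = Real.sin θ := rfl

lemma norm_circ (θ : ℝ) : ‖circ θ‖ = 1 := by
  rw [EuclideanSpace.norm_eq]
  simp only [Fin.sum_univ_two, circ_apply0, circ_apply1, Real.norm_eq_abs, sq_abs]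
  rw [Real.cos_sq_add_sin_sq, Real.sqrt_one]

lemma dist_circ (a b : ℝ) : dist (circ a) (circ b) = 2 * |Real.sin ((a - b)/2)| := by
  rw [EuclideanSpace.dist_eq]
  have h1 : ∑ i, dist (circ a i) (circ b i) ^ 2
      = 2 - 2 * Real.cos (a - b) := by
    simp [Fin.sum_univ_two, Real.dist_eq, sq_abs]
    rw [Real.cos_sub]
    ring_nf
    nlinarith [Real.sin_sq_add_cos_sq a, Real.sin_sq_add_cos_sq b]
  rw [h1]
  have h2 : 2 - 2 * Real.cos (a - b) = (2 * |Real.sin ((a-b)/2)|)^2 := by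
    have h3 := Real.cos_sq ((a-b)/2)
    rw [mul_div_cancel₀ (a-b) (two_ne_zero)] at h3
    nlinarith [sq_abs (Real.sin ((a-b)/2)), Real.sin_sq_add_cos_sq ((a-b)/2)]
  rw [h2, Real.sqrt_sq (by positivity)]

lemma lipschitz_circ : LipschitzWith 1 circ := by
  apply LipschitzWith.of_dist_le_mul
  intro a b
  rw [dist_circ, Real.dist_eq, NNReal.coe_one, one_mul]
  calc 2 * |Real.sin ((a - b)/2)| ≤ 2 * |(a - b)/2| :=
        mul_le_mul_of_nonneg_left Real.abs_sin_le_abs (by norm_num)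
    _ = |a - b| := by rw [abs_div]; simp; ring

lemma circ_injOn {a b : ℝ} (h : |a - b| < 2 * π) (he : circ a = circ b) : a = b := by
  have hc : Real.cos a = Real.cos b := congrArg (fun x => x 0) he
  have hs : Real.sin a = Real.sin b := congrArg (fun x => x 1) he
  have h1 : Real.cos (a - b) = 1 := by
    rw [Real.cos_sub, hc, hs]
    nlinarith [Real.sin_sq_add_cos_sq b]
  have := (Real.cos_eq_one_iff_of_lt_of_lt (by cases abs_lt.1 h; linarith)
    (by cases abs_lt.1 h; linarith)).1 h1
  linarith

lemma circ_surj {x : Pt} (hx : ‖x‖ = 1) : ∃ θ ∈ Icc (-π) π, circ θ = x := by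
  set z : ℂ := ⟨x 0, x 1⟩ with hz
  have hz0 : z ≠ 0 := by
    intro h
    have h0 : x 0 = 0 := congrArg Complex.re h
    have h1 : x 1 = 0 := congrArg Complex.im h
    rw [EuclideanSpace.norm_eq] at hx
    simp [Fin.sum_univ_two, h0, h1] at hx
  have habs : ‖z‖ = 1 := by
    rw [Complex.norm_def, Complex.normSq_apply]
    rw [EuclideanSpace.norm_eq] at hx
    simpa [Fin.sum_univ_two, sq_abs, sq] using hx
  refine ⟨Complex.arg z, ⟨(Complex.neg_pi_lt_arg z).le, Complex.arg_le_pi z⟩, ?_⟩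
  have hc : Real.cos (Complex.arg z) = x 0 := by rw [Complex.cos_arg hz0, habs]; simp [hz]
  have hs : Real.sin (Complex.arg z) = x 1 := by rw [Complex.sin_arg, habs]; simp [hz]
  ext i
  fin_cases i
  · simpa using hc
  · simpa using hs

lemma hausdorff_singleton_zero (x : Pt) : μH[1] ({x} : Set Pt) = 0 := by
  haveI := MeasureTheory.Measure.noAtoms_hausdorff Pt one_pos
  exact measure_singleton x

lemma le_hausdorff_of_connected {A : Set Pt} (hA : IsPreconnected A) {x y : Pt}
    (hx : x ∈ A) (hy : y ∈ A) : ENNReal.ofReal (dist x y) ≤ μH[1] A := by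
  rcases eq_or_ne x y with rfl | hxy
  · simp
  have hyx : y - x ≠ 0 := sub_ne_zero.2 (Ne.symm hxy)
  set d : Pt := ‖y - x‖⁻¹ • (y - x) with hdd
  set f : Pt → ℝ := fun u => (inner ℝ (u - x) d : ℝ) with hff
  have hd : ‖d‖ = 1 := by
    rw [hdd, norm_smul, norm_inv, norm_norm, inv_mul_cancel₀ (norm_ne_zero_iff.2 hyx)]
  have hf : LipschitzWith 1 f := by
    apply LipschitzWith.of_dist_le_mul
    intro a b
    rw [Real.dist_eq]
    have h2 : f a - f b = (inner ℝ (a - b) d : ℝ) := by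
      rw [hff]; simp only [← inner_sub_left]; congr 1; abel
    rw [h2, NNReal.coe_one, one_mul]
    calc |(inner ℝ (a - b) d : ℝ)| ≤ ‖a - b‖ * ‖d‖ := abs_real_inner_le_norm _ _
      _ = dist a b := by rw [hd, mul_one, dist_eq_norm]
  have h0 : f x = 0 := by simp [hff]
  have h1 : f y = ‖y - x‖ := by
    show (inner ℝ (y - x) d : ℝ) = _
    rw [hdd, real_inner_smul_right, real_inner_self_eq_norm_sq, sq,
      inv_mul_cancel_left₀ (norm_ne_zero_iff.2 hyx)]
  have hIcc : Icc (0 : ℝ) ‖y - x‖ ⊆ f '' A :=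
    (hA.image f hf.continuous.continuousOn).Icc_subset ⟨x, hx, h0⟩ ⟨y, hy, h1⟩
  calc ENNReal.ofReal (dist x y) = volume (Icc (0 : ℝ) ‖y - x‖) := by
        rw [Real.volume_Icc, sub_zero, dist_eq_norm']
    _ = μH[1] (Icc (0 : ℝ) ‖y - x‖) := by rw [hausdorffMeasure_real]
    _ ≤ μH[1] (f '' A) := measure_mono hIcc
    _ ≤ (1 : ℝ≥0) ^ (1:ℝ) * μH[1] A := hf.hausdorffMeasure_image_le zero_le_one A
    _ = μH[1] A := by simp

lemma circ_mem_sphere (θ : ℝ) : circ θ ∈ sphere (0 : Pt) 1 := by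
  rw [mem_sphere_zero_iff_norm]; exact norm_circ θ

lemma sphere_subset : sphere (0 : Pt) 1 ⊆ circ '' Icc (-π) π := by
  intro x hx
  obtain ⟨θ, hθ, he⟩ := circ_surj (mem_sphere_zero_iff_norm.1 hx)
  exact ⟨θ, hθ, he⟩

lemma hausdorff_sphere_le : μH[1] (sphere (0 : Pt) 1) ≤ ENNReal.ofReal (2 * π) := by
  calc μH[1] (sphere (0 : Pt) 1) ≤ μH[1] (circ '' Icc (-π) π) := measure_mono sphere_subset
    _ ≤ (1 : ℝ≥0) ^ (1:ℝ) * μH[1] (Icc (-π) π) :=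
        lipschitz_circ.hausdorffMeasure_image_le zero_le_one _
    _ = volume (Icc (-π) π) := by rw [hausdorffMeasure_real]; simp
    _ = ENNReal.ofReal (2 * π) := by rw [Real.volume_Icc]; ring_nf

lemma hausdorff_sphere_ge_aux (N : ℕ) (hN : 4 ≤ N) :
    ENNReal.ofReal ((N : ℝ) * (2 * Real.sin (π / N))) ≤ μH[1] (sphere (0 : Pt) 1) := by
  have hNR : (4 : ℝ) ≤ (N : ℝ) := by exact_mod_cast hN
  have hN0 : (0 : ℝ) < N := by linarith
  set a : ℕ → ℝ := fun k => -π + 2 * π / N * k with ha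
  have hstep : ∀ k : ℕ, a (k + 1) - a k = 2 * π / N := by
    intro k; simp [ha]; push_cast; ring
  have hmono : StrictMono a := by
    intro i j hij
    simp only [ha]
    have : (0:ℝ) < 2 * π / N := by positivity
    have : (i:ℝ) < j := by exact_mod_cast hij
    nlinarith
  have haN : a N = π := by
    simp only [ha]
    field_simp
    linarith
  have ha0 : a 0 = -π := by simp [ha]
  clear_value a
  have hsub : ∀ k < N, Ico (a k) (a (k + 1)) ⊆ Ico (-π) π := by
    intro k hk θ hθ
    constructor
    · calc -π = a 0 := ha0.symm
        _ ≤ a k := (hmono.monotone (Nat.zero_le k))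
        _ ≤ θ := hθ.1
    · calc θ < a (k + 1) := hθ.2
        _ ≤ a N := hmono.monotone hk
        _ = π := haN
  -- injectivity on each closed subinterval
  have hinj : ∀ k, ∀ θ₁ ∈ Icc (a k) (a (k+1)), ∀ θ₂ ∈ Icc (a k) (a (k+1)),
      circ θ₁ = circ θ₂ → θ₁ = θ₂ := by
    intro k θ₁ h1 θ₂ h2 he
    rw [mem_Icc] at h1 h2
    apply circ_injOn _ he
    have h3 := hstep k
    have hlt : 2 * π / N < 2 * π := by
      rw [div_lt_iff₀ hN0]
      nlinarith [Real.pi_pos]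
    have e1 : a k ≤ θ₁ := h1.1
    have e2 : θ₁ ≤ a (k+1) := h1.2
    have e3 : a k ≤ θ₂ := h2.1
    have e4 : θ₂ ≤ a (k+1) := h2.2
    rw [abs_lt]
    constructor
    · linarith
    · linarith
  set D : ℕ → Set Pt := fun k => circ '' Ico (a k) (a (k + 1)) with hD
  have hDeq : ∀ k, D k = circ '' Icc (a k) (a (k + 1)) \ {circ (a (k + 1))} := by
    intro k
    apply Subset.antisymm
    · rintro _ ⟨θ, hθ, rfl⟩
      have hak : a k ≤ a (k+1) := (hmono (Nat.lt_succ_self k)).le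
      refine ⟨⟨θ, ⟨hθ.1, hθ.2.le⟩, rfl⟩, ?_⟩
      simp only [mem_singleton_iff]
      intro he
      have := hinj k θ ⟨hθ.1, hθ.2.le⟩ (a (k+1)) ⟨hak, le_refl _⟩ he
      exact absurd this (ne_of_lt hθ.2)
    · rintro x ⟨⟨θ, hθ, rfl⟩, hne⟩
      refine ⟨θ, ⟨hθ.1, ?_⟩, rfl⟩
      rcases lt_or_eq_of_le hθ.2 with h | h
      · exact h
      · exfalso; subst h; simp at hne
  have hDmeas : ∀ k, MeasurableSet (D k) := by
    intro k
    rw [hDeq k]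
    exact ((isCompact_Icc.image lipschitz_circ.continuous).measurableSet).diff
      (measurableSet_singleton _)
  have hDdisj : ∀ k < N, ∀ l < N, k ≠ l → Disjoint (D k) (D l) := by
    intro k hk l hl hkl
    rw [Set.disjoint_left]
    rintro _ ⟨θ₁, h1, rfl⟩ ⟨θ₂, h2, he⟩
    have hm1 := hsub k hk h1
    have hm2 := hsub l hl h2
    have : θ₂ = θ₁ := by
      apply circ_injOn _ he
      rw [abs_lt]
      constructor <;> nlinarith [hm1.1, hm1.2, hm2.1, hm2.2, Real.pi_pos]
    subst this
    -- θ₂ in both Ico intervals, k ≠ l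
    rcases Nat.lt_or_ge k l with h | h
    · have : a (k+1) ≤ a l := hmono.monotone h
      linarith [h1.2, h2.1]
    · have hlk : l < k := lt_of_le_of_ne h (Ne.symm hkl)
      have : a (l+1) ≤ a k := hmono.monotone hlk
      linarith [h1.1, h2.2]
  have hDlow : ∀ k, ENNReal.ofReal (2 * Real.sin (π / N)) ≤ μH[1] (D k) := by
    intro k
    have hconn : IsPreconnected (circ '' Icc (a k) (a (k+1))) :=
      (isPreconnected_Icc).image _ lipschitz_circ.continuous.continuousOn
    have hak : a k ≤ a (k+1) := (hmono (Nat.lt_succ_self k)).le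
    have hchord : dist (circ (a k)) (circ (a (k+1))) = 2 * Real.sin (π / N) := by
      rw [dist_circ]
      have : (a k - a (k + 1)) / 2 = -(π / N) := by
        have h := hstep k
        have h' : a k - a (k + 1) = -(2 * π / N) := by linarith
        rw [h']; ring
      rw [this, Real.sin_neg, abs_neg, abs_of_nonneg]
      apply Real.sin_nonneg_of_nonneg_of_le_pi
      · positivity
      · rw [div_le_iff₀ hN0]; nlinarith [Real.pi_pos]
    have h1 : ENNReal.ofReal (2 * Real.sin (π / N)) ≤ μH[1] (circ '' Icc (a k) (a (k+1))) := by
      rw [← hchord]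
      exact le_hausdorff_of_connected hconn ⟨a k, ⟨le_refl _, hak⟩, rfl⟩
        ⟨a (k+1), ⟨hak, le_refl _⟩, rfl⟩
    calc ENNReal.ofReal (2 * Real.sin (π / N)) ≤ μH[1] (circ '' Icc (a k) (a (k+1))) := h1
      _ ≤ μH[1] (D k ∪ {circ (a (k+1))}) := by
          apply measure_mono
          rw [hDeq k]
          intro x hx
          by_cases hxx : x = circ (a (k+1))
          · exact Or.inr (by simp [hxx])
          · exact Or.inl ⟨hx, hxx⟩
      _ ≤ μH[1] (D k) + μH[1] {circ (a (k+1))} := measure_union_le _ _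
      _ = μH[1] (D k) := by rw [hausdorff_singleton_zero, add_zero]
  have hunion : (⋃ k ∈ Finset.range N, D k) ⊆ sphere (0 : Pt) 1 := by
    intro x hx
    simp only [mem_iUnion] at hx
    obtain ⟨k, _, hk⟩ := hx
    obtain ⟨θ, _, rfl⟩ := hk
    exact circ_mem_sphere θ
  calc ENNReal.ofReal ((N : ℝ) * (2 * Real.sin (π / N)))
      = (N : ℕ) • ENNReal.ofReal (2 * Real.sin (π / N)) := by
        rw [nsmul_eq_mul, ← ENNReal.ofReal_natCast N, ← ENNReal.ofReal_mul (by positivity)]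
    _ = ∑ k ∈ Finset.range N, ENNReal.ofReal (2 * Real.sin (π / N)) := by
        rw [Finset.sum_const, Finset.card_range]
    _ ≤ ∑ k ∈ Finset.range N, μH[1] (D k) := Finset.sum_le_sum fun k _ => hDlow k
    _ = μH[1] (⋃ k ∈ Finset.range N, D k) := by
        rw [measure_biUnion_finset ?_ fun k _ => hDmeas k]
        intro k hk l hl hkl
        exact hDdisj k (Finset.mem_range.1 hk) l (Finset.mem_range.1 hl) hkl
    _ ≤ μH[1] (sphere (0 : Pt) 1) := measure_mono hunion

lemma hausdorff_sphere : μH[1] (sphere (0 : Pt) 1) = ENNReal.ofReal (2 * π) := by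
  refine le_antisymm hausdorff_sphere_le ?_
  have htend : Tendsto (fun N : ℕ => ENNReal.ofReal ((N : ℝ) * (2 * Real.sin (π / N))))
      atTop (𝓝 (ENNReal.ofReal (2 * π))) := by
    apply ENNReal.tendsto_ofReal
    have h1 : Tendsto (fun N : ℕ => π ^ 3 / (2 * (N : ℝ) ^ 2)) atTop (𝓝 0) := by
      apply Tendsto.div_atTop tendsto_const_nhds
      exact ((tendsto_pow_atTop two_ne_zero).comp tendsto_natCast_atTop_atTop).const_mul_atTop
        two_pos
    have h2 : Tendsto (fun N : ℕ => 2 * π - π ^ 3 / (2 * (N : ℝ) ^ 2)) atTop (𝓝 (2 * π)) := by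
      simpa using (tendsto_const_nhds (x := 2 * π) (f := atTop)).sub h1
    apply tendsto_of_tendsto_of_tendsto_of_le_of_le' h2
      (tendsto_const_nhds (x := 2 * π) (f := atTop))
    · filter_upwards [eventually_ge_atTop 4] with N hN
      have hNR : (4 : ℝ) ≤ (N : ℝ) := by exact_mod_cast hN
      have hN0 : (0 : ℝ) < N := by linarith
      have hx0 : 0 < π / N := by positivity
      have hx1 : π / N ≤ 1 := by
        rw [div_le_one hN0]; nlinarith [Real.pi_lt_d2]
      have : π / N - (π/N) ^ 3 / 4 < Real.sin (π / N) := by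
          have := Real.sin_gt_sub_cube hx0; nlinarith [pow_pos hx0 3]
      have hexp : (N:ℝ) * (2 * (π / N - (π/N) ^ 3 / 4)) = 2*π - (N:ℝ) * ((π/N)^3/2) := by
        field_simp; ring
      have heq2 : (N:ℝ) * ((π/N)^3/2) = π^3/(2*(N:ℝ)^2) := by
        field_simp
      nlinarith [Real.pi_pos]
    · filter_upwards [eventually_ge_atTop 1] with N hN
      have hN0 : (0 : ℝ) < N := by exact_mod_cast hN
      have hx0 : 0 ≤ π / N := by positivity
      have := Real.sin_le hx0
      calc (N:ℝ) * (2 * Real.sin (π / N)) ≤ (N:ℝ) * (2 * (π / N)) := by nlinarith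
        _ = 2 * π := by field_simp
  apply le_of_tendsto htend
  filter_upwards [eventually_ge_atTop 4] with N hN
  exact hausdorff_sphere_ge_aux N hN

-- the set of unit vectors orthogonal to a fixed nonzero vector has measure zero
lemma perp_zero {v : Pt} (hv : v ≠ 0) :
    μH[1] {u : Pt | ‖u‖ = 1 ∧ (inner ℝ u v : ℝ) = 0} = 0 := by
  set w : Pt := (WithLp.equiv 2 (Fin 2 → ℝ)).symm ![-(v 1), v 0] with hw
  have hw0 : w 0 = -(v 1) := rfl
  have hw1 : w 1 = v 0 := rfl
  have hinner : ∀ x y : Pt, (inner ℝ x y : ℝ) = x 0 * y 0 + x 1 * y 1 := by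
    intro x y
    rw [PiLp.inner_apply, Fin.sum_univ_two]
    simp [RCLike.inner_apply, mul_comm]
  have hv2 : v 0 ≠ 0 ∨ v 1 ≠ 0 := by
    by_contra h
    push_neg at h
    apply hv
    ext i; fin_cases i <;> simp [h.1, h.2]
  have hnw : ‖w‖ = ‖v‖ := by
    rw [EuclideanSpace.norm_eq, EuclideanSpace.norm_eq, Fin.sum_univ_two, Fin.sum_univ_two,
      hw0, hw1]
    congr 1
    simp [sq_abs]
    ring
  have hnw0 : ‖w‖ ≠ 0 := by
    rw [hnw]; exact norm_ne_zero_iff.2 hv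
  set A : Pt := ‖w‖⁻¹ • w with hA
  have key : {u : Pt | ‖u‖ = 1 ∧ (inner ℝ u v : ℝ) = 0} ⊆ {A, -A} := by
    rintro u ⟨hu1, hu2⟩
    rw [hinner] at hu2
    set t : ℝ := (u 0 * w 0 + u 1 * w 1) / ‖v‖ ^ 2 with ht
    have hvpos : (0:ℝ) < ‖v‖ := norm_pos_iff.2 hv
    have hv2' : (0:ℝ) < ‖v‖ ^ 2 := by positivity
    have hnormv : ‖v‖ ^ 2 = v 0 ^ 2 + v 1 ^ 2 := by
      rw [← real_inner_self_eq_norm_sq, hinner]; ring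
    have hu : u = t • w := by
      ext k
      fin_cases k
      · show u 0 = (t • w) 0
        rw [PiLp.smul_apply, smul_eq_mul, ht, hw0, hw1, div_mul_eq_mul_div,
          eq_div_iff (ne_of_gt hv2'), hnormv]
        linear_combination (v 0) * hu2
      · show u 1 = (t • w) 1
        rw [PiLp.smul_apply, smul_eq_mul, ht, hw0, hw1, div_mul_eq_mul_div,
          eq_div_iff (ne_of_gt hv2'), hnormv]
        linear_combination (v 1) * hu2
    have hts : |t| * ‖w‖ = 1 := by
      rw [hu, norm_smul, Real.norm_eq_abs] at hu1
      exact hu1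
    rcases le_or_gt 0 t with h | h
    · left
      rw [hu, hA]
      congr 1
      rw [abs_of_nonneg h] at hts
      field_simp
      linarith
    · right
      rw [hu, hA, ← neg_smul]
      congr 1
      rw [abs_of_neg h] at hts
      field_simp
      linarith
  refine le_antisymm ?_ (zero_le)
  calc μH[1] {u : Pt | ‖u‖ = 1 ∧ (inner ℝ u v : ℝ) = 0} ≤ μH[1] ({A, -A} : Set Pt) :=
        measure_mono key
    _ ≤ μH[1] ({A} : Set Pt) + μH[1] ({-A} : Set Pt) := by
        rw [Set.insert_eq]; exact measure_union_le _ _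
    _ = 0 := by rw [hausdorff_singleton_zero, hausdorff_singleton_zero, add_zero]


variable {n : ℕ}

lemma tendsto_aux (p : Fin n → Pt) (hp : Function.Injective p) (i : Fin n) :
    Tendsto (fun ε : ℝ => μH[1] {x : Pt | dist x (ε • p i) = 1 ∧
      ∀ j : Fin n, j < i → 1 ≤ dist x (ε • p j)}) (𝓝[>] (0:ℝ)) (𝓝 (extAngle p i)) := by
  set B : ℝ → Set Pt := fun ε => {u : Pt | ‖u‖ = 1 ∧ ∀ j : Fin n, j < i →
    0 ≤ 2 * (inner ℝ u (p i - p j) : ℝ) + ε * ‖p i - p j‖ ^ 2} with hB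
  have hmono : ∀ {ε₁ ε₂ : ℝ}, ε₁ ≤ ε₂ → B ε₁ ⊆ B ε₂ := by
    intro ε₁ ε₂ hle u hu
    refine ⟨hu.1, fun j hj => ?_⟩
    have h1 := hu.2 j hj
    nlinarith [sq_nonneg ‖p i - p j‖]
  have hsph : ∀ ε, B ε ⊆ sphere (0:Pt) 1 := fun ε u hu => mem_sphere_zero_iff_norm.2 hu.1
  have hclosed : ∀ ε, IsClosed (B ε) := by
    intro ε
    have hrw : B ε = {u : Pt | ‖u‖ = 1} ∩ ⋂ j : Fin n, {u : Pt | j < i →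
        0 ≤ 2 * (inner ℝ u (p i - p j) : ℝ) + ε * ‖p i - p j‖ ^ 2} := by
      ext u
      simp only [hB, mem_setOf_eq, mem_inter_iff, mem_iInter]
    rw [hrw]
    refine (isClosed_eq continuous_norm continuous_const).inter (isClosed_iInter fun j => ?_)
    by_cases hj : j < i
    · simp only [hj, true_implies]
      exact isClosed_le continuous_const
        (Continuous.add (Continuous.mul continuous_const
          (Continuous.inner continuous_id continuous_const)) continuous_const)
    · simp only [hj, false_implies, setOf_true]
      exact isClosed_univ
  have hfin : ∀ ε, μH[1] (B ε) ≠ ⊤ := by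
    intro ε
    have hs : μH[1] (sphere (0:Pt) 1) ≠ ⊤ := by
      rw [hausdorff_sphere]; exact ENNReal.ofReal_ne_top
    exact ne_top_of_le_ne_top hs (measure_mono (hsph ε))
  have hinter : (⋂ k : ℕ, B (1/((k:ℝ)+1))) = B 0 := by
    apply Subset.antisymm
    · intro u hu
      simp only [mem_iInter] at hu
      refine ⟨(hu 0).1, fun j hj => ?_⟩
      rw [zero_mul, add_zero]
      by_contra hneg
      push_neg at hneg
      set a : ℝ := 2 * (inner ℝ u (p i - p j) : ℝ) with ha
      set s : ℝ := ‖p i - p j‖ ^ 2 with hs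
      have ha0 : a < 0 := by exact_mod_cast hneg
      obtain ⟨k, hk⟩ := exists_nat_gt (s / (-a))
      have hk1 : (0:ℝ) < (k:ℝ) + 1 := by positivity
      have h2 := (hu k).2 j hj
      have h4 : (0:ℝ) ≤ ((k:ℝ)+1) * (a + 1/((k:ℝ)+1) * s) := by
        apply mul_nonneg hk1.le
        exact h2
      have h5 : ((k:ℝ)+1) * (1/((k:ℝ)+1) * s) = s := by field_simp
      have h3 : 0 ≤ a * ((k:ℝ)+1) + s := by nlinarith
      have hk' : s < (k:ℝ) * (-a) := (div_lt_iff₀ (by linarith)).1 hk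
      nlinarith
    · intro u hu
      simp only [mem_iInter]
      intro k
      exact hmono (by positivity) hu
  have hiInf : μH[1] (B 0) = ⨅ k : ℕ, μH[1] (B (1/((k:ℝ)+1))) := by
    rw [← hinter]
    apply Directed.measure_iInter
    · exact fun k => ((hclosed _).measurableSet).nullMeasurableSet
    · intro k l
      refine ⟨max k l, hmono ?_, hmono ?_⟩
      · apply one_div_le_one_div_of_le (by positivity)
        have : (k:ℝ) ≤ (max k l : ℕ) := by exact_mod_cast le_max_left k l
        linarith
      · apply one_div_le_one_div_of_le (by positivity)
        have : (l:ℝ) ≤ (max k l : ℕ) := by exact_mod_cast le_max_right k l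
        linarith
    · exact ⟨0, hfin _⟩
  -- equality of measures for positive ε
  have hEq : ∀ ε : ℝ, 0 < ε → μH[1] {x : Pt | dist x (ε • p i) = 1 ∧
      ∀ j : Fin n, j < i → 1 ≤ dist x (ε • p j)} = μH[1] (B ε) := by
    intro ε hε
    have hset : {x : Pt | dist x (ε • p i) = 1 ∧ ∀ j : Fin n, j < i → 1 ≤ dist x (ε • p j)}
        = (fun u : Pt => u + ε • p i) '' B ε := by
      ext x
      simp only [mem_setOf_eq, mem_image, hB]
      constructor
      · rintro ⟨h1, h2⟩
        have hu1 : ‖x - ε • p i‖ = 1 := by rw [← dist_eq_norm]; exact h1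
        refine ⟨x - ε • p i, ⟨hu1, fun j hj => ?_⟩, by abel⟩
        have h3 := h2 j hj
        have h4 : x - ε • p j = (x - ε • p i) + ε • (p i - p j) := by
          rw [smul_sub]; abel
        rw [dist_eq_norm, h4] at h3
        have h5 := norm_add_sq_real (x - ε • p i) (ε • (p i - p j))
        rw [norm_smul, real_inner_smul_right, Real.norm_eq_abs, abs_of_pos hε] at h5
        nlinarith [mul_le_mul h3 h3 zero_le_one (le_trans zero_le_one h3), hu1, hε]
      · rintro ⟨u, ⟨hu1, hu2⟩, rfl⟩
        constructor
        · rw [dist_eq_norm, add_sub_cancel_right]; exact hu1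
        · intro j hj
          have h4 : u + ε • p i - ε • p j = u + ε • (p i - p j) := by
            rw [smul_sub]; abel
          rw [dist_eq_norm, h4]
          have h5 := norm_add_sq_real u (ε • (p i - p j))
          rw [norm_smul, real_inner_smul_right, Real.norm_eq_abs, abs_of_pos hε] at h5
          have h6 := hu2 j hj
          nlinarith [norm_nonneg (u + ε • (p i - p j)), mul_nonneg hε.le h6, hu1, hε]
    rw [hset]
    have hiso : Isometry (fun u : Pt => u + ε • p i) :=
      Isometry.of_dist_eq fun a b => by rw [dist_add_right]
    rw [hiso.hausdorffMeasure_image (Or.inl zero_le_one)]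
  -- the limit value equals extAngle
  have hext : extAngle p i = μH[1] (B 0) := by
    by_cases h0 : (i : ℕ) = 0
    · have hBs : B 0 = sphere (0:Pt) 1 := by
        apply Subset.antisymm (hsph 0)
        intro u hu
        refine ⟨mem_sphere_zero_iff_norm.1 hu, fun j hj => absurd hj ?_⟩
        rw [Fin.lt_def, h0]
        exact Nat.not_lt_zero _
      simp only [extAngle]
      rw [if_pos h0, hBs, hausdorff_sphere]
    · simp only [extAngle]
      rw [if_neg h0]
      by_cases hhull : p i ∈ convexHull ℝ (p '' {j : Fin n | j < i})
      · rw [if_pos hhull]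
        rw [convexHull_eq] at hhull
        obtain ⟨ι, t, w, z, hw0, hw1, hz, hx⟩ := hhull
        obtain ⟨b, hbt, hbw⟩ := Finset.exists_ne_zero_of_sum_ne_zero
          (hw1 ▸ (one_ne_zero : (1:ℝ) ≠ 0))
        obtain ⟨j₀, hj₀, hzb⟩ := hz b hbt
        have hvne : p i - z b ≠ 0 := by
          rw [← hzb]
          exact sub_ne_zero.2 ((hp.ne (ne_of_lt hj₀)).symm)
        have hsub2 : B 0 ⊆ {u : Pt | ‖u‖ = 1 ∧ (inner ℝ u (p i - z b) : ℝ) = 0} := by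
          rintro u ⟨hu1, hu2⟩
          refine ⟨hu1, ?_⟩
          have hterm : ∀ c ∈ t, 0 ≤ w c * (inner ℝ u (p i - z c) : ℝ) := by
            intro c hc
            obtain ⟨j', hj', hzc⟩ := hz c hc
            have h7 := hu2 j' hj'
            rw [zero_mul, add_zero] at h7
            apply mul_nonneg (hw0 c hc)
            rw [← hzc]
            linarith
          have hsum : ∑ c ∈ t, w c * (inner ℝ u (p i - z c) : ℝ) = 0 := by
            have hcm : t.centerMass w z = ∑ c ∈ t, w c • z c :=
              Finset.centerMass_eq_of_sum_1 t z hw1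
            have hinnersum : ∑ c ∈ t, w c * (inner ℝ u (z c) : ℝ)
                = (inner ℝ u (p i) : ℝ) := by
              rw [← hx, hcm, inner_sum]
              apply Finset.sum_congr rfl
              intro c hc
              rw [real_inner_smul_right]
            calc ∑ c ∈ t, w c * (inner ℝ u (p i - z c) : ℝ)
                = ∑ c ∈ t, (w c * (inner ℝ u (p i) : ℝ) - w c * (inner ℝ u (z c) : ℝ)) := by
                  apply Finset.sum_congr rfl
                  intro c hc
                  rw [inner_sub_right]; ring
              _ = (∑ c ∈ t, w c) * (inner ℝ u (p i) : ℝ)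
                  - ∑ c ∈ t, w c * (inner ℝ u (z c) : ℝ) := by
                  rw [Finset.sum_sub_distrib, Finset.sum_mul]
              _ = 0 := by rw [hw1, one_mul, hinnersum]; ring
          have h8 := (Finset.sum_eq_zero_iff_of_nonneg hterm).1 hsum b hbt
          rcases mul_eq_zero.1 h8 with h | h
          · exact absurd h hbw
          · exact h
        refine (le_antisymm ?_ (zero_le)).symm
        exact le_trans (measure_mono hsub2) (le_of_eq (perp_zero hvne))
      · rw [if_neg hhull]
        set T : Set Pt := {u : Pt | ‖u‖ = 1 ∧ ∀ j : Fin n, j < i →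
          (inner ℝ u (p j) : ℝ) < (inner ℝ u (p i) : ℝ)} with hT
        have hTsub : T ⊆ B 0 := by
          rintro u ⟨hu1, hu2⟩
          refine ⟨hu1, fun j hj => ?_⟩
          have h9 := hu2 j hj
          rw [zero_mul, add_zero, inner_sub_right]
          linarith
        have hdiff : B 0 \ T ⊆ ⋃ j : {j : Fin n // j < i},
            {u : Pt | ‖u‖ = 1 ∧ (inner ℝ u (p i - p (j : Fin n)) : ℝ) = 0} := by
          rintro u ⟨⟨hu1, hu2⟩, hu3⟩
          rw [hT, mem_setOf_eq] at hu3
          push_neg at hu3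
          obtain ⟨j, hj, hle⟩ := hu3 hu1
          refine mem_iUnion.2 ⟨⟨j, hj⟩, hu1, ?_⟩
          have h2 := hu2 j hj
          rw [zero_mul, add_zero, inner_sub_right] at h2
          rw [inner_sub_right]
          linarith
        have hzero : μH[1] (⋃ j : {j : Fin n // j < i},
            {u : Pt | ‖u‖ = 1 ∧ (inner ℝ u (p i - p (j : Fin n)) : ℝ) = 0}) = 0 := by
          refine le_antisymm (le_trans (measure_iUnion_le _) ?_) (zero_le)
          have hz2 : ∀ j : {j : Fin n // j < i},
              μH[1] {u : Pt | ‖u‖ = 1 ∧ (inner ℝ u (p i - p (j : Fin n)) : ℝ) = 0} = 0 := by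
            intro j
            apply perp_zero
            exact sub_ne_zero.2 ((hp.ne (ne_of_lt j.2)).symm)
          rw [tsum_congr hz2]
          simp
        have hcover : B 0 ⊆ T ∪ (B 0 \ T) := by
          intro u hu
          by_cases h : u ∈ T
          · exact Or.inl h
          · exact Or.inr ⟨hu, h⟩
        apply le_antisymm
        · exact measure_mono hTsub
        · calc μH[1] (B 0) ≤ μH[1] (T ∪ (B 0 \ T)) := measure_mono hcover
            _ ≤ μH[1] T + μH[1] (B 0 \ T) := measure_union_le _ _
            _ ≤ μH[1] T + μH[1] (⋃ j : {j : Fin n // j < i},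
                {u : Pt | ‖u‖ = 1 ∧ (inner ℝ u (p i - p (j : Fin n)) : ℝ) = 0}) := by
                exact add_le_add le_rfl (measure_mono hdiff)
            _ = μH[1] T := by rw [hzero, add_zero]
  -- assemble the tendsto
  have htend : Tendsto (fun ε : ℝ => μH[1] (B ε)) (𝓝[>] (0:ℝ)) (𝓝 (μH[1] (B 0))) := by
    rw [tendsto_order]
    constructor
    · intro a ha
      apply eventually_nhdsWithin_of_forall
      intro ε hε
      exact lt_of_lt_of_le ha (measure_mono (hmono (le_of_lt hε)))
    · intro a ha
      rw [hiInf] at ha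
      obtain ⟨k, hk⟩ := iInf_lt_iff.1 ha
      have hmem : Ioo (0:ℝ) (1/((k:ℝ)+1)) ∈ 𝓝[>] (0:ℝ) :=
        Ioo_mem_nhdsGT_of_mem ⟨le_refl 0, by positivity⟩
      filter_upwards [hmem] with ε hε
      exact lt_of_le_of_lt (measure_mono (hmono hε.2.le)) hk
  rw [hext]
  apply Tendsto.congr' _ htend
  filter_upwards [self_mem_nhdsWithin] with ε hε
  exact (hEq ε hε).symm


end AuxVisProof

/-- `vis(εp) → ∑ τ_i` as `ε → 0⁺`. -/
theorem tendsto_vis_scaled_extAngles {n : ℕ} (p : Fin n → Pt) (hp : Function.Injective p) :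
    Filter.Tendsto (fun ε : ℝ => vis (fun i => ε • p i)) (𝓝[>] (0 : ℝ))
      (𝓝 (∑ i : Fin n, extAngle p i)) := by
  have h := tendsto_finset_sum (Finset.univ : Finset (Fin n))
    (fun i _ => tendsto_aux p hp i)
  simpa only [vis] using h
end
end

section
/- For every real C > 0 there exists a real C' > 0 with the following property: for every n ≥ 2 and every C-dense set of n distinct points p_1, …, p_n in ℝ² (listed in any stacking order), one has limsup_{ε→0⁺} vis(εp_1, …, εp_n) ≤ C' · n^{3/4}. -/
open MeasureTheory Filter Set Metric
open scoped ENNReal NNReal Topology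

noncomputable section

open scoped RealInnerProductSpace

namespace VisAux
open Real Finset


def E (t : ℝ) : Pt := (WithLp.equiv 2 (Fin 2 → ℝ)).symm ![Real.cos t, Real.sin t]
@[simp] lemma E_apply_zero (t : ℝ) : E t 0 = Real.cos t := rfl
@[simp] lemma E_apply_one (t : ℝ) : E t 1 = Real.sin t := rfl
lemma E_eq (t : ℝ) (x : Pt) (h0 : x 0 = Real.cos t) (h1 : x 1 = Real.sin t) : E t = x := by
  have : (WithLp.equiv 2 (Fin 2 → ℝ)) (E t) = (WithLp.equiv 2 (Fin 2 → ℝ)) x := by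
    funext i; fin_cases i
    · simpa using h0.symm
    · simpa using h1.symm
  exact (WithLp.equiv 2 (Fin 2 → ℝ)).injective this
lemma inner_E (t : ℝ) (v : Pt) : ⟪E t, v⟫ = Real.cos t * v 0 + Real.sin t * v 1 := by
  simp [PiLp.inner_apply, Fin.sum_univ_two, RCLike.inner_apply, starRingEnd_apply]
  ring

lemma E_periodic (t : ℝ) (k : ℤ) : E (t + 2 * π * k) = E t := by
  apply E_eq
  · rw [E_apply_zero, show t + 2*π*k = t + k * (2*π) by ring, Real.cos_add_int_mul_two_pi]
  · rw [E_apply_one, show t + 2*π*k = t + k * (2*π) by ring, Real.sin_add_int_mul_two_pi]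

lemma exists_E {x : Pt} (hx : ‖x‖ = 1) : ∃ t ∈ Icc (-π) π, E t = x := by
  have hsum : (x 0)^2 + (x 1)^2 = 1 := by
    have := congrArg (·^2) hx
    rw [EuclideanSpace.norm_eq, Fin.sum_univ_two] at this
    simp only [Real.norm_eq_abs, sq_abs] at this
    rw [Real.sq_sqrt (by positivity)] at this
    simpa using this
  have h0 : -1 ≤ x 0 := by nlinarith
  have h1 : x 0 ≤ 1 := by nlinarith
  rcases le_or_gt 0 (x 1) with hb | hb
  · refine ⟨Real.arccos (x 0), ⟨by linarith [Real.arccos_nonneg (x 0), Real.pi_pos], Real.arccos_le_pi _⟩, ?_⟩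
    apply E_eq
    · rw [Real.cos_arccos h0 h1]
    · rw [Real.sin_arccos]
      rw [show 1 - (x 0)^2 = (x 1)^2 by linarith, Real.sqrt_sq hb]
  · refine ⟨-Real.arccos (x 0), ⟨by linarith [Real.arccos_le_pi (x 0)], by linarith [Real.arccos_nonneg (x 0), Real.pi_pos.le]⟩, ?_⟩
    apply E_eq
    · rw [Real.cos_neg, Real.cos_arccos h0 h1]
    · rw [Real.sin_neg, Real.sin_arccos]
      rw [show 1 - (x 0)^2 = (x 1)^2 by linarith, Real.sqrt_sq_eq_abs, abs_of_neg hb, neg_neg]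

lemma exists_E_shift (φ : ℝ) {x : Pt} (hx : ‖x‖ = 1) : ∃ t ∈ Icc (-π) π, E (t + φ) = x := by
  obtain ⟨s, hs, hsx⟩ := exists_E hx
  set k : ℤ := round ((s - φ) / (2 * π)) with hk
  refine ⟨s - φ - 2 * π * k, ?_, ?_⟩
  · have h := abs_sub_round ((s - φ) / (2 * π))
    have hπ : (0:ℝ) < 2 * π := by positivity
    have : |s - φ - 2 * π * k| ≤ π := by
      have : |s - φ - 2 * π * k| = 2 * π * |(s - φ) / (2 * π) - k| := by
        have e : s - φ - 2 * π * k = 2 * π * ((s - φ) / (2 * π) - k) := by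
          field_simp
        rw [e, abs_mul, abs_of_pos hπ]
      rw [this]
      calc 2 * π * |(s - φ) / (2 * π) - k| ≤ 2 * π * (1/2) := by
            apply mul_le_mul_of_nonneg_left h hπ.le
        _ = π := by ring
    exact abs_le.mp this
  · rw [show s - φ - 2*π*k + φ = s + 2*π*((-k : ℤ) : ℝ) by push_cast; ring, E_periodic, hsx]

lemma norm_E (t : ℝ) : ‖E t‖ = 1 := by
  have h : ‖E t 0‖^2 + ‖E t 1‖^2 = 1 := by
    simp only [E_apply_zero, E_apply_one, Real.norm_eq_abs, sq_abs]
    rw [add_comm]; exact Real.sin_sq_add_cos_sq t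
  rw [EuclideanSpace.norm_eq, Fin.sum_univ_two, h, Real.sqrt_one]

lemma dist_E_le (s t : ℝ) : dist (E s) (E t) ≤ dist s t := by
  rw [EuclideanSpace.dist_eq, Real.dist_eq]
  have h1 : (dist (E s 0) (E t 0))^2 + (dist (E s 1) (E t 1))^2 = 2 - 2 * Real.cos (s - t) := by
    simp only [E_apply_zero, E_apply_one, Real.dist_eq]
    rw [sq_abs, sq_abs]
    have := Real.cos_sub s t
    nlinarith [Real.sin_sq_add_cos_sq s, Real.sin_sq_add_cos_sq t]
  have h2 : 2 - 2 * Real.cos (s - t) ≤ (s - t)^2 := by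
    have := Real.one_sub_sq_div_two_le_cos (x := s - t)
    nlinarith
  calc Real.sqrt (∑ i, (dist (E s i) (E t i))^2)
      = Real.sqrt ((dist (E s 0) (E t 0))^2 + (dist (E s 1) (E t 1))^2) := by
        rw [Fin.sum_univ_two]
    _ ≤ Real.sqrt ((s-t)^2) := by rw [h1]; exact Real.sqrt_le_sqrt h2
    _ = |s - t| := Real.sqrt_sq_eq_abs _


lemma inner_E_E (s t : ℝ) : ⟪E s, E t⟫ = Real.cos (s - t) := by
  rw [inner_E, E_apply_zero, E_apply_one, Real.cos_sub]

lemma exists_polar {v : Pt} (hv : v ≠ 0) : ∃ φ, v = ‖v‖ • E φ := by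
  have hn : ‖v‖ ≠ 0 := norm_ne_zero_iff.mpr hv
  have : ‖(‖v‖⁻¹ • v : Pt)‖ = 1 := by
    rw [norm_smul, norm_inv, norm_norm, inv_mul_cancel₀ hn]
  obtain ⟨t, _, ht⟩ := exists_E this
  exact ⟨t, by rw [ht, smul_inv_smul₀ hn]⟩

lemma cos_window {t : ℝ} (ht : t ∈ Icc (-π) π) (hc : 0 ≤ Real.cos t) :
    t ∈ Icc (-(π/2)) (π/2) := by
  obtain ⟨ht1, ht2⟩ := ht
  constructor
  · by_contra h
    push_neg at h
    have : Real.cos (-t) < 0 := by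
      apply Real.cos_neg_of_pi_div_two_lt_of_lt (by linarith) (by linarith [Real.pi_pos])
    rw [Real.cos_neg] at this; linarith
  · by_contra h
    push_neg at h
    have : Real.cos t < 0 :=
      Real.cos_neg_of_pi_div_two_lt_of_lt h (by linarith [Real.pi_pos])
    linarith




-- assume cos_window available (proved in aux2); restate as axiom-free: copy
lemma cos_branch {t₁ t₂ t₃ s : ℝ} (h1 : 0 ≤ Real.cos t₁) (h2 : 0 ≤ Real.cos t₂)
    (h3 : 0 ≤ Real.cos t₃) (h13 : t₁ < t₃) (h32 : t₃ < t₂) (hlen : t₂ - t₁ ≤ π)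
    (hs1 : t₁ ≤ s) (hs2 : s ≤ t₂) :
    Real.sin (min (s - t₁) (t₂ - s)) ≤ Real.cos s := by
  have hπ := Real.pi_pos
  set k : ℤ := round (t₁ / (2 * π)) with hk
  have hshift : ∀ x : ℝ, Real.cos (x - 2 * π * k) = Real.cos x := by
    intro x
    rw [show x - 2*π*k = x - k * (2*π) by ring, Real.cos_sub_int_mul_two_pi]
  set T1 := t₁ - 2 * π * k with hT1def
  set T2 := t₂ - 2 * π * k with hT2def
  set T3 := t₃ - 2 * π * k with hT3def
  set S := s - 2 * π * k with hSdef
  have hcs : Real.cos s = Real.cos S := (hshift s).symm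
  have hT1mem : T1 ∈ Icc (-π) π := by
    have h := abs_sub_round (t₁ / (2 * π))
    have e : T1 = 2 * π * (t₁ / (2 * π) - k) := by rw [hT1def]; field_simp
    have : |T1| ≤ π := by
      rw [e, abs_mul, abs_of_pos (by positivity : (0:ℝ) < 2*π)]
      calc 2 * π * |t₁ / (2 * π) - k| ≤ 2 * π * (1/2) := by
            apply mul_le_mul_of_nonneg_left h (by positivity)
        _ = π := by ring
    exact abs_le.mp this
  have hc1 : 0 ≤ Real.cos T1 := by rw [hshift]; exact h1
  have hc2 : 0 ≤ Real.cos T2 := by rw [hshift]; exact h2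
  have hc3 : 0 ≤ Real.cos T3 := by rw [hshift]; exact h3
  have hw1 : T1 ∈ Icc (-(π/2)) (π/2) := cos_window hT1mem hc1
  have h2112 : T2 - T1 = t₂ - t₁ := by rw [hT2def, hT1def]; ring
  have hmin : min (s - t₁) (t₂ - s) = min (S - T1) (T2 - S) := by
    rw [hSdef, hT1def, hT2def]; ring_nf
  rw [hcs, hmin]
  have hS1 : T1 ≤ S := by rw [hSdef, hT1def]; linarith
  have hS2 : S ≤ T2 := by rw [hSdef, hT2def]; linarith
  have hT13 : T1 < T3 := by rw [hT1def, hT3def]; linarith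
  have hT32 : T3 < T2 := by rw [hT3def, hT2def]; linarith
  by_cases hc : T2 ≤ π / 2
  · -- main case: everything within [-π/2, π/2]
    set m := min (S - T1) (T2 - S) with hm
    have hm0 : 0 ≤ m := le_min (by linarith) (by linarith)
    have hmle : m ≤ π/2 := by
      have : m ≤ (T2 - T1) / 2 := by
        rcases min_le_iff.mpr (Or.inl (le_refl (S - T1))) with _
        have := min_le_left (S - T1) (T2 - S)
        have := min_le_right (S - T1) (T2 - S)
        cases le_total (S - T1) (T2 - S) with
        | inl h => rw [hm, min_eq_left h]; linarith
        | inr h => rw [hm, min_eq_right h]; linarith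
      have : T2 - T1 ≤ π := by rw [h2112]; exact hlen
      linarith [min_le_left (S - T1) (T2 - S), min_le_right (S - T1) (T2 - S),
        (show m ≤ (T2 - T1)/2 by
          cases le_total (S - T1) (T2 - S) with
          | inl h => rw [hm, min_eq_left h]; linarith
          | inr h => rw [hm, min_eq_right h]; linarith)]
    have habs : |S| ≤ π/2 - m := by
      rw [abs_le]
      constructor
      · have : m ≤ S - T1 := min_le_left _ _
        have := hw1.1
        linarith
      · have : m ≤ T2 - S := min_le_right _ _
        linarith
    have : Real.cos (π/2 - m) ≤ Real.cos |S| := by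
      apply Real.cos_le_cos_of_nonneg_of_le_pi (abs_nonneg S) (by linarith) habs
    rw [Real.cos_abs] at this
    rw [← Real.cos_pi_div_two_sub]
    exact this
  · -- degenerate case: T2 > π/2
    exfalso
    push_neg at hc
    have hT2le : T2 ≤ 3 * π / 2 := by
      have : T2 - T1 ≤ π := by rw [h2112]; exact hlen
      have := hw1.2
      linarith
    rcases lt_or_eq_of_le hT2le with h | h
    · have : Real.cos T2 < 0 :=
        Real.cos_neg_of_pi_div_two_lt_of_lt hc (by linarith)
      linarith
    · -- T2 = 3π/2, so T1 = π/2 and T3 strictly between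
      have hT1eq : T1 = π / 2 := by
        have : T2 - T1 ≤ π := by rw [h2112]; exact hlen
        have := hw1.2
        linarith
      have : Real.cos T3 < 0 := by
        apply Real.cos_neg_of_pi_div_two_lt_of_lt (by rw [← hT1eq]; exact hT13)
        rw [← h] at *
        linarith
      linarith

lemma meas_le {f : ℝ → Pt} (hf : LipschitzWith 1 f) (s : Set ℝ) :
    μH[1] (f '' s) ≤ volume s := by
  have h := hf.hausdorffMeasure_image_le (by norm_num : (0:ℝ) ≤ 1) s
  simpa [MeasureTheory.hausdorffMeasure_real] using h




lemma telescope {n : ℕ} [NeZero n] (p : Fin n → Pt) (u : Pt) (hu : ‖u‖ = 1)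
    (D : ℝ) (hD : ∀ j : Fin n, ‖p j - p 0‖ ≤ D) (S : Finset (Fin n)) (c : Fin n → ℝ)
    (hS : ∀ i ∈ S, i ≠ 0) (hc : ∀ i ∈ S, 0 ≤ c i)
    (hlow : ∀ i ∈ S, ∀ j, j < i → c i ≤ ⟪u, p i - p j⟫) :
    ∑ i ∈ S, c i ≤ D := by
  have hAne : ∀ k : ℕ, (univ.filter (fun j : Fin n => (j : ℕ) ≤ k)).Nonempty :=
    fun k => ⟨0, by simp⟩
  set M : ℕ → ℝ := fun k =>
    (univ.filter (fun j : Fin n => (j : ℕ) ≤ k)).sup' (hAne k) (fun j => ⟪u, p j⟫) with hM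
  have hle : ∀ (k : ℕ) (j : Fin n), (j : ℕ) ≤ k → ⟪u, p j⟫ ≤ M k := by
    intro k j hj
    exact Finset.le_sup' (fun j => ⟪u, p j⟫) (by simp [hj])
  have hex : ∀ k : ℕ, ∃ j : Fin n, (j : ℕ) ≤ k ∧ M k = ⟪u, p j⟫ := by
    intro k
    obtain ⟨j, hjmem, hjeq⟩ := Finset.exists_mem_eq_sup' (hAne k) (fun j => ⟪u, p j⟫)
    exact ⟨j, by simpa using hjmem, hjeq⟩
  have hmono : Monotone M := by
    intro k k' hk
    rw [hM]
    apply Finset.sup'_le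
    intro j hj
    simp only [Finset.mem_filter, Finset.mem_univ, true_and] at hj
    exact hle k' j (hj.trans hk)
  have hzero : ∀ i : Fin n, i ≠ 0 → (i : ℕ) ≠ 0 := by
    intro i hi h
    exact hi (Fin.ext (by simpa using h))
  have key : ∀ i ∈ S, c i ≤ M (i : ℕ) - M ((i : ℕ) - 1) := by
    intro i hi
    obtain ⟨j, hjle, hjeq⟩ := hex ((i : ℕ) - 1)
    have hine : (i : ℕ) ≠ 0 := hzero i (hS i hi)
    have hji : j < i := by
      have : (j : ℕ) < (i : ℕ) := by omega
      exact this
    have h1 : c i ≤ ⟪u, p i⟫ - ⟪u, p j⟫ := by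
      have := hlow i hi j hji
      rwa [inner_sub_right] at this
    have h2 : ⟪u, p i⟫ ≤ M (i : ℕ) := hle _ i le_rfl
    rw [hjeq]
    linarith
  calc ∑ i ∈ S, c i ≤ ∑ i ∈ S, (M (i : ℕ) - M ((i : ℕ) - 1)) := Finset.sum_le_sum key
    _ = ∑ k ∈ S.image (fun i : Fin n => (i : ℕ) - 1), (M (k + 1) - M k) := by
        rw [Finset.sum_image]
        · apply Finset.sum_congr rfl
          intro i hi
          have hine : (i : ℕ) ≠ 0 := hzero i (hS i hi)
          have he : (i : ℕ) - 1 + 1 = (i : ℕ) := by omega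
          rw [he]
        · intro i hi j hj hij
          have h1 : (i : ℕ) ≠ 0 := hzero i (hS i hi)
          have h2 : (j : ℕ) ≠ 0 := hzero j (hS j hj)
          apply Fin.ext
          dsimp only at hij
          omega
    _ ≤ ∑ k ∈ Finset.range (n - 1), (M (k + 1) - M k) := by
        apply Finset.sum_le_sum_of_subset_of_nonneg
        · intro k hk
          simp only [Finset.mem_image] at hk
          obtain ⟨i, hi, rfl⟩ := hk
          have h1 : (i : ℕ) ≠ 0 := hzero i (hS i hi)
          have h2 : (i : ℕ) < n := i.isLt
          exact Finset.mem_range.mpr (by omega)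
        · intro k _ _
          have := hmono (Nat.le_succ k)
          linarith
    _ = M (n - 1) - M 0 := Finset.sum_range_sub M (n - 1)
    _ ≤ D := by
        obtain ⟨j, hjle, hjeq⟩ := hex (n - 1)
        have h0 : ⟪u, p 0⟫ ≤ M 0 := hle 0 0 (by simp)
        have h2 : ⟪u, p j⟫ - ⟪u, p 0⟫ = ⟪u, p j - p 0⟫ := (inner_sub_right _ _ _).symm
        have h3 : ⟪u, p j - p 0⟫ ≤ ‖u‖ * ‖p j - p 0‖ := real_inner_le_norm _ _
        rw [hu, one_mul] at h3
        have h4 := hD j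
        rw [hjeq]
        linarith

lemma deep_point {n : ℕ} [NeZero n] {p : Fin n → Pt} (hp : Function.Injective p) {i : Fin n}
    (hi : i ≠ 0) {φ : ℝ} (hφ : p i - p 0 = ‖p i - p 0‖ • E φ) {δ : ℝ} (hδ : 0 < δ)
    (hδle : ∀ j, j < i → δ ≤ ‖p i - p j‖)
    {T : Set ℝ}
    (hT : ∀ t, t ∈ T ↔ (t ∈ Icc (-π) π ∧ ∀ j, j < i → 0 ≤ ⟪E (t + φ), p i - p j⟫))
    (hTc : IsClosed T) {τ : ℝ} (hτpos : 0 < τ) (hτ : ENNReal.ofReal τ ≤ volume T) :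
    ∃ a : ℝ, ∀ s ∈ Icc a (a + τ/2), ∀ j, j < i → δ * (τ/6) ≤ ⟪E (s + φ), p i - p j⟫ := by
  have hπ := Real.pi_pos
  have hvol_pos : volume T ≠ 0 := by
    intro h
    rw [h] at hτ
    exact absurd (le_antisymm hτ zero_le) (by simp [ENNReal.ofReal_pos.mpr hτpos, ENNReal.ofReal_pos.mpr hτpos]; positivity)
  have hne : T.Nonempty := nonempty_of_measure_ne_zero hvol_pos
  have h0i : (0 : Fin n) < i := (Fin.pos_iff_ne_zero' i).mpr hi
  have hwin : T ⊆ Icc (-(π/2)) (π/2) := by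
    intro t ht
    obtain ⟨htmem, hcons⟩ := (hT t).mp ht
    have h1 := hcons 0 h0i
    rw [hφ, real_inner_smul_right, inner_E_E, show t + φ - φ = t by ring] at h1
    have hnormpos : 0 < ‖p i - p 0‖ :=
      norm_pos_iff.mpr (sub_ne_zero_of_ne (hp.ne hi))
    have hcos : 0 ≤ Real.cos t := by nlinarith
    exact cos_window htmem hcos
  have hbb : BddBelow T := bddBelow_Icc.mono hwin
  have hba : BddAbove T := bddAbove_Icc.mono hwin
  set t₁ := sInf T with ht₁
  set t₂ := sSup T with ht₂
  have ht₁mem : t₁ ∈ T := hTc.csInf_mem hne hbb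
  have ht₂mem : t₂ ∈ T := hTc.csSup_mem hne hba
  have hsub : T ⊆ Icc t₁ t₂ := fun t ht => ⟨csInf_le hbb ht, le_csSup hba ht⟩
  have ht₁₂ : t₁ ≤ t₂ := csInf_le_csSup hne hbb hba
  have hτle : τ ≤ t₂ - t₁ := by
    have h1 : volume T ≤ volume (Icc t₁ t₂) := measure_mono hsub
    rw [Real.volume_Icc] at h1
    exact (ENNReal.ofReal_le_ofReal_iff (by linarith)).mp (hτ.trans h1)
  have hlenπ : t₂ - t₁ ≤ π := by
    have h1 := hwin ht₁mem
    have h2 := hwin ht₂mem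
    simp only [Set.mem_Icc] at h1 h2
    linarith
  -- find a third point strictly between
  obtain ⟨t₃, ht₃mem, ht₃⟩ : ∃ t₃ ∈ T, t₁ < t₃ ∧ t₃ < t₂ := by
    by_contra hcon
    push_neg at hcon
    have hTsub : T ⊆ ({t₁, t₂} : Set ℝ) := by
      intro t ht
      obtain ⟨ha, hb⟩ := hsub ht
      simp only [Set.mem_insert_iff, Set.mem_singleton_iff]
      rcases eq_or_lt_of_le ha with h | h
      · exact Or.inl h.symm
      · exact Or.inr (le_antisymm hb (hcon t ht h))
    have : volume T ≤ volume ({t₁, t₂} : Set ℝ) := measure_mono hTsub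
    rw [(Set.toFinite ({t₁, t₂} : Set ℝ)).measure_zero volume] at this
    have : volume T = 0 := le_antisymm this zero_le
    exact hvol_pos this
  refine ⟨t₁ + τ/4, ?_⟩
  intro s hs j hj
  simp only [Set.mem_Icc] at hs
  have hsrange : t₁ ≤ s ∧ s ≤ t₂ := ⟨by linarith [hs.1], by linarith [hs.2, hτle]⟩
  have hvne : p i - p j ≠ 0 := sub_ne_zero_of_ne (hp.ne (ne_of_gt hj))
  obtain ⟨ψ, hψ⟩ := exists_polar hvne
  have hr : 0 < ‖p i - p j‖ := norm_pos_iff.mpr hvne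
  have hcons : ∀ t ∈ T, 0 ≤ Real.cos (t + φ - ψ) := by
    intro t ht
    have h1 := ((hT t).mp ht).2 j hj
    rw [hψ, real_inner_smul_right, inner_E_E] at h1
    nlinarith
  have hbranch := cos_branch (hcons t₁ ht₁mem) (hcons t₂ ht₂mem) (hcons t₃ ht₃mem)
    (by linarith [ht₃.1]) (by linarith [ht₃.2]) (by linarith)
    (by linarith [hsrange.1] : t₁ + φ - ψ ≤ s + φ - ψ) (by linarith [hsrange.2])
  have hminrw : min (s + φ - ψ - (t₁ + φ - ψ)) (t₂ + φ - ψ - (s + φ - ψ))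
      = min (s - t₁) (t₂ - s) := by ring_nf
  rw [hminrw] at hbranch
  set m := min (s - t₁) (t₂ - s) with hm
  have hm1 : τ/4 ≤ m := le_min (by linarith [hs.1]) (by linarith [hs.2, hτle])
  have hm2 : m ≤ π/2 := by
    rcases le_total (s - t₁) (t₂ - s) with h | h
    · rw [hm, min_eq_left h]; linarith
    · rw [hm, min_eq_right h]; linarith
  have hsinm : Real.sin (τ/4) ≤ Real.sin m := by
    apply Real.strictMonoOn_sin.monotoneOn ⟨by linarith, by linarith⟩ ⟨by linarith, by linarith⟩ hm1
  have hsinτ : τ/6 ≤ Real.sin (τ/4) := by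
    have h4 : τ/4 ≤ 1 := by
      have := Real.pi_le_four
      linarith
    have h5 := Real.sin_gt_sub_cube (by linarith : 0 < τ/4)
    have h6 : (τ/4)^3 ≤ τ/4 := by nlinarith [sq_nonneg (τ/4), sq_nonneg (τ/4 - 1)]
    linarith
  have hgoal : δ * (τ/6) ≤ ‖p i - p j‖ * Real.cos (s + φ - ψ) := by
    apply mul_le_mul (hδle j hj) (by linarith) (by linarith) hr.le
  rw [hψ, real_inner_smul_right, inner_E_E]
  exact hgoal

end VisAux

set_option maxHeartbeats 2000000 in
/-- for `C`-dense sets, `limsup_{ε→0⁺} vis(εp) ≤ C' · n^{3/4}`. -/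
theorem limsup_vis_scaled_le_of_cDense (C : ℝ) (hC : 0 < C) :
    ∃ C' : ℝ, 0 < C' ∧ ∀ n : ℕ, 2 ≤ n → ∀ p : Fin n → Pt,
      Function.Injective p → CDense C p →
      Filter.limsup (fun ε : ℝ => vis (fun i => ε • p i)) (𝓝[>] (0 : ℝ)) ≤
        ENNReal.ofReal (C' * (n : ℝ) ^ ((3 : ℝ) / 4)) := by
  have hπ := Real.pi_pos
  refine ⟨6 * Real.pi + 12 * C, by positivity, ?_⟩
  intro n hn p hp hdense
  haveI : NeZero n := ⟨by omega⟩
  classical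
  have hnpos : (0:ℝ) < n := by positivity
  -- minimal distance pair
  have hoffne : (Finset.univ.offDiag (α := Fin n)).Nonempty := by
    refine ⟨(⟨0, by omega⟩, ⟨1, by omega⟩), Finset.mem_offDiag.mpr ⟨Finset.mem_univ _, Finset.mem_univ _, ?_⟩⟩
    intro h
    have := congrArg Fin.val h
    simp at this
  obtain ⟨q, hqmem, hqmin⟩ := Finset.exists_min_image _ (fun q : Fin n × Fin n => dist (p q.1) (p q.2)) hoffne
  have hq12 : q.1 ≠ q.2 := (Finset.mem_offDiag.mp hqmem).2.2
  set δ : ℝ := dist (p q.1) (p q.2) with hδdef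
  have hδpos : 0 < δ := dist_pos.mpr (fun h => hq12 (hp h))
  have hδmin : ∀ k l : Fin n, k ≠ l → δ ≤ dist (p k) (p l) := fun k l hkl =>
    hqmin (k, l) (Finset.mem_offDiag.mpr ⟨Finset.mem_univ _, Finset.mem_univ _, hkl⟩)
  set D : ℝ := C * Real.sqrt n * δ with hDdef
  have hD : ∀ i j : Fin n, dist (p i) (p j) ≤ D := fun i j => hdense i j q.1 q.2 hq12
  have hDnn : 0 ≤ D := le_trans dist_nonneg (hD 0 0)
  have hDnorm : ∀ j : Fin n, ‖p j - p 0‖ ≤ D := fun j => by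
    rw [← dist_eq_norm]; exact hD j 0
  -- phases
  have hphase : ∀ i : Fin n, ∃ φ : ℝ, i ≠ 0 → p i - p 0 = ‖p i - p 0‖ • VisAux.E φ := by
    intro i
    by_cases h : i = 0
    · exact ⟨0, fun h' => absurd h h'⟩
    · obtain ⟨φ, hφ⟩ := VisAux.exists_polar (sub_ne_zero_of_ne (hp.ne h))
      exact ⟨φ, fun _ => hφ⟩
  choose Φ hΦ using hphase
  -- the constraint sets
  set T : Fin n → ℝ → Set ℝ := fun i ε =>
    Icc (-Real.pi) Real.pi ∩ ⋂ (j : Fin n) (_ : j < i),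
      {t : ℝ | -(ε * ‖p i - p j‖^2 / 2) ≤ ⟪VisAux.E (t + Φ i), p i - p j⟫} with hTdef
  have hTmem : ∀ (i : Fin n) (ε : ℝ) (t : ℝ), t ∈ T i ε ↔
      (t ∈ Icc (-Real.pi) Real.pi ∧
        ∀ j, j < i → -(ε * ‖p i - p j‖^2 / 2) ≤ ⟪VisAux.E (t + Φ i), p i - p j⟫) := by
    intro i ε t
    simp only [hTdef, Set.mem_inter_iff, Set.mem_iInter, Set.mem_setOf_eq]
  have hTclosed : ∀ (i : Fin n) (ε : ℝ), IsClosed (T i ε) := by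
    intro i ε
    apply IsClosed.inter isClosed_Icc
    apply isClosed_iInter; intro j; apply isClosed_iInter; intro _
    have he : {t : ℝ | -(ε * ‖p i - p j‖^2/2) ≤ ⟪VisAux.E (t + Φ i), p i - p j⟫}
        = {t : ℝ | -(ε * ‖p i - p j‖^2/2) ≤
            Real.cos (t + Φ i) * (p i - p j) 0 + Real.sin (t + Φ i) * (p i - p j) 1} := by
      ext t
      simp only [Set.mem_setOf_eq]
      rw [VisAux.inner_E]
    rw [he]
    apply isClosed_le continuous_const
    apply Continuous.add
    · exact (Real.continuous_cos.comp (continuous_id.add continuous_const)).mul continuous_const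
    · exact (Real.continuous_sin.comp (continuous_id.add continuous_const)).mul continuous_const
  have hTmono : ∀ (i : Fin n) (ε ε' : ℝ), ε ≤ ε' → T i ε ⊆ T i ε' := by
    intro i ε ε' h t ht
    rw [hTmem] at ht ⊢
    refine ⟨ht.1, fun j hj => le_trans ?_ (ht.2 j hj)⟩
    have h2 : 0 ≤ ‖p i - p j‖^2 / 2 := by positivity
    nlinarith
  have hTIcc : ∀ (i : Fin n) (ε : ℝ), T i ε ⊆ Icc (-Real.pi) Real.pi :=
    fun i ε t ht => ((hTmem i ε t).mp ht).1
  have hTfin : ∀ (i : Fin n) (ε : ℝ), volume (T i ε) ≠ ⊤ := by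
    intro i ε
    refine ((measure_mono (hTIcc i ε)).trans_lt ?_).ne
    rw [Real.volume_Icc]
    exact ENNReal.ofReal_lt_top
  -- Step 1: pointwise bound
  have step1 : ∀ ε : ℝ, 0 < ε → vis (fun k => ε • p k) ≤ ∑ i : Fin n, volume (T i ε) := by
    intro ε hε
    rw [vis]
    apply Finset.sum_le_sum
    intro i _
    have hglip : LipschitzWith 1 (fun t : ℝ => ε • p i + VisAux.E (t + Φ i)) := by
      apply LipschitzWith.of_dist_le_mul
      intro a b
      simp only [NNReal.coe_one, one_mul]
      calc dist (ε • p i + VisAux.E (a + Φ i)) (ε • p i + VisAux.E (b + Φ i))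
          = dist (VisAux.E (a + Φ i)) (VisAux.E (b + Φ i)) := dist_add_left _ _ _
        _ ≤ dist (a + Φ i) (b + Φ i) := VisAux.dist_E_le _ _
        _ = dist a b := by rw [Real.dist_eq, Real.dist_eq]; ring_nf
    have hsub : {x : Pt | dist x (ε • p i) = 1 ∧ ∀ j, j < i → 1 ≤ dist x (ε • p j)}
        ⊆ (fun t : ℝ => ε • p i + VisAux.E (t + Φ i)) '' (T i ε) := by
      intro x hx
      obtain ⟨hx1, hx2⟩ := hx
      have hy : ‖x - ε • p i‖ = 1 := by rw [← dist_eq_norm]; exact hx1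
      obtain ⟨t, htmem, hte⟩ := VisAux.exists_E_shift (Φ i) hy
      refine ⟨t, ?_, ?_⟩
      · rw [hTmem]
        refine ⟨htmem, fun j hj => ?_⟩
        have h1 := hx2 j hj
        have hxd : x - ε • p j = (x - ε • p i) + ε • (p i - p j) := by
          rw [smul_sub]; abel
        have h2 : 1 ≤ ‖(x - ε • p i) + ε • (p i - p j)‖ := by
          rw [← hxd, ← dist_eq_norm]; exact h1
        have h3 := norm_add_sq_real (x - ε • p i) (ε • (p i - p j))
        rw [hy] at h3
        have h5 : ⟪x - ε • p i, ε • (p i - p j)⟫ = ε * ⟪x - ε • p i, p i - p j⟫ :=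
          real_inner_smul_right _ _ _
        have h6 : ‖ε • (p i - p j)‖^2 = ε^2 * ‖p i - p j‖^2 := by
          rw [norm_smul, Real.norm_eq_abs, mul_pow, sq_abs]
        have h7 : (0:ℝ) ≤ ‖(x - ε • p i) + ε • (p i - p j)‖ := norm_nonneg _
        have h8 : 1 ≤ ‖(x - ε • p i) + ε • (p i - p j)‖^2 := by nlinarith
        rw [hte]
        nlinarith [h8, h3, h5, h6]
      · simp only []
        rw [hte]
        abel
    calc μH[1] {x : Pt | dist x (ε • p i) = 1 ∧ ∀ j, j < i → 1 ≤ dist x (ε • p j)}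
        ≤ μH[1] ((fun t : ℝ => ε • p i + VisAux.E (t + Φ i)) '' (T i ε)) := measure_mono hsub
      _ ≤ volume (T i ε) := VisAux.meas_le hglip _
  -- Step 2: pass to the limit
  have hlim : Filter.limsup (fun ε : ℝ => vis fun i => ε • p i) (𝓝[>] (0:ℝ))
      ≤ ∑ i : Fin n, volume (T i 0) := by
    have hBle : ∀ m : ℕ, Filter.limsup (fun ε : ℝ => vis fun i => ε • p i) (𝓝[>] (0:ℝ))
        ≤ ∑ i : Fin n, volume (T i (1/(m+1))) := by
      intro m
      apply Filter.limsup_le_of_le (by isBoundedDefault)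
      filter_upwards [Ioc_mem_nhdsGT (show (0:ℝ) < 1/(m+1) by positivity)] with ε hε
      calc vis (fun i => ε • p i) ≤ ∑ i : Fin n, volume (T i ε) := step1 ε hε.1
        _ ≤ ∑ i : Fin n, volume (T i (1/(m+1))) :=
            Finset.sum_le_sum fun i _ => measure_mono (hTmono i ε _ hε.2)
    have hBtends : Filter.Tendsto (fun m : ℕ => ∑ i : Fin n, volume (T i (1/(m+1)))) atTop
        (𝓝 (∑ i : Fin n, volume (T i 0))) := by
      apply tendsto_finset_sum
      intro i _
      have h1 : Filter.Tendsto (fun m : ℕ => volume (T i (1/(m+1)))) atTop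
          (𝓝 (volume (⋂ m : ℕ, T i (1/(m+1))))) := by
        apply tendsto_measure_iInter_atTop
        · exact fun m => ((hTclosed i _).measurableSet).nullMeasurableSet
        · intro a b hab
          apply hTmono
          have ha : (0:ℝ) < a + 1 := by positivity
          have hb : (0:ℝ) < b + 1 := by positivity
          apply one_div_le_one_div_of_le ha
          exact_mod_cast by omega
        · exact ⟨0, hTfin i _⟩
      have h2 : (⋂ m : ℕ, T i (1/(m+1))) = T i 0 := by
        apply Set.Subset.antisymm
        · intro t ht
          rw [hTmem]
          have h3 := fun m : ℕ => (hTmem i (1/(m+1)) t).mp (Set.mem_iInter.mp ht m)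
          refine ⟨(h3 0).1, fun j hj => ?_⟩
          have h4 : ∀ m : ℕ, -((1/((m:ℝ)+1)) * ‖p i - p j‖^2 / 2)
              ≤ ⟪VisAux.E (t + Φ i), p i - p j⟫ := fun m => (h3 m).2 j hj
          have h5 : Filter.Tendsto (fun m : ℕ => -((1/((m:ℝ)+1)) * ‖p i - p j‖^2 / 2)) atTop
              (𝓝 0) := by
            have h6 := (tendsto_one_div_add_atTop_nhds_zero_nat.mul_const (‖p i - p j‖^2 / 2)).neg
            simpa [mul_div_assoc] using h6
          have h7 := le_of_tendsto h5 (Filter.Eventually.of_forall h4)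
          simpa using h7
        · intro t ht
          apply Set.mem_iInter.mpr
          intro m
          exact hTmono i 0 (1/(m+1)) (by positivity) ht
      rw [h2] at h1
      exact h1
    exact ge_of_tendsto' hBtends hBle
  -- Step 3: real bookkeeping
  set τ : Fin n → ℝ := fun i => (volume (T i 0)).toReal with hτdef
  have hτvol : ∀ i, volume (T i 0) = ENNReal.ofReal (τ i) :=
    fun i => (ENNReal.ofReal_toReal (hTfin i 0)).symm
  have hτnn : ∀ i, 0 ≤ τ i := fun i => ENNReal.toReal_nonneg
  suffices hsum : (∑ i ∈ Finset.univ.erase (0 : Fin n), τ i) + 2 * Real.pi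
      ≤ (6 * Real.pi + 12 * C) * (n:ℝ) ^ ((3:ℝ)/4) by
    refine hlim.trans ?_
    calc ∑ i : Fin n, volume (T i 0)
        = volume (T 0 0) + ∑ i ∈ Finset.univ.erase (0 : Fin n), volume (T i 0) :=
          (Finset.add_sum_erase _ _ (Finset.mem_univ 0)).symm
      _ ≤ ENNReal.ofReal (2 * Real.pi) + ENNReal.ofReal (∑ i ∈ Finset.univ.erase (0 : Fin n), τ i) := by
          apply add_le_add
          · refine (measure_mono (hTIcc 0 0)).trans ?_
            rw [Real.volume_Icc]
            exact ENNReal.ofReal_le_ofReal (by linarith)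
          · rw [ENNReal.ofReal_sum_of_nonneg (fun i _ => hτnn i)]
            exact le_of_eq (Finset.sum_congr rfl fun i _ => hτvol i)
      _ = ENNReal.ofReal ((∑ i ∈ Finset.univ.erase (0 : Fin n), τ i) + 2 * Real.pi) := by
          rw [← ENNReal.ofReal_add (by positivity) (Finset.sum_nonneg fun i _ => hτnn i)]
          ring_nf
      _ ≤ ENNReal.ofReal ((6 * Real.pi + 12 * C) * (n:ℝ) ^ ((3:ℝ)/4)) :=
          ENNReal.ofReal_le_ofReal hsum
    -- Step 4: the combinatorial estimate
  set mm : ℕ := ⌈(n:ℝ) ^ ((1:ℝ)/4)⌉₊ with hmm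
  have hn1R : (1:ℝ) ≤ (n:ℝ) := by exact_mod_cast (by omega : 1 ≤ n)
  have hn1 : (1:ℝ) ≤ (n:ℝ) ^ ((1:ℝ)/4) := Real.one_le_rpow hn1R (by norm_num)
  have hm1 : (n:ℝ) ^ ((1:ℝ)/4) ≤ mm := Nat.le_ceil _
  have hmpos : (0:ℝ) < mm := lt_of_lt_of_le (by linarith) hm1
  have hmpos' : 0 < mm := by exact_mod_cast hmpos
  have hm2 : (mm:ℝ) ≤ 2 * (n:ℝ) ^ ((1:ℝ)/4) := by
    have := Nat.ceil_lt_add_one (show (0:ℝ) ≤ (n:ℝ) ^ ((1:ℝ)/4) by positivity)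
    linarith
  set Big : Finset (Fin n) :=
    (Finset.univ.erase (0:Fin n)).filter (fun i => 4*Real.pi/mm ≤ τ i) with hBigdef
  have hsel : ∀ i ∈ Big, ∃ k, k ∈ Finset.range mm ∧
      ∀ j, j < i → δ * (τ i / 6) ≤ ⟪VisAux.E (2*Real.pi*k/mm), p i - p j⟫ := by
    intro i hi
    have hi0 : i ≠ 0 := Finset.ne_of_mem_erase (Finset.mem_filter.mp hi).1
    have hτbig : 4*Real.pi/mm ≤ τ i := (Finset.mem_filter.mp hi).2
    have hτpos : 0 < τ i := lt_of_lt_of_le (by positivity) hτbig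
    have hδle : ∀ j, j < i → δ ≤ ‖p i - p j‖ := by
      intro j hj
      rw [← dist_eq_norm]
      exact hδmin i j (ne_of_gt hj)
    have hT0 : ∀ t : ℝ, t ∈ T i 0 ↔ (t ∈ Icc (-Real.pi) Real.pi ∧
        ∀ j, j < i → 0 ≤ ⟪VisAux.E (t + Φ i), p i - p j⟫) := by
      intro t
      rw [hTmem]
      constructor
      · rintro ⟨h1, h2⟩
        exact ⟨h1, fun j hj => by have := h2 j hj; simpa using this⟩
      · rintro ⟨h1, h2⟩
        exact ⟨h1, fun j hj => by simpa using h2 j hj⟩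
    obtain ⟨a, ha⟩ := VisAux.deep_point hp hi0 (hΦ i hi0) hδpos hδle hT0 (hTclosed i 0)
      hτpos (le_of_eq (hτvol i).symm)
    set θ : ℝ := 2*Real.pi/mm with hθ
    have hθpos : 0 < θ := by positivity
    set k' : ℤ := ⌈(a + Φ i)/θ⌉ with hk'
    have hk'1 : a + Φ i ≤ θ * k' := by
      rw [mul_comm, ← div_le_iff₀ hθpos]
      exact Int.le_ceil _
    have hk'2 : θ * k' ≤ a + Φ i + τ i / 2 := by
      have h1 : (k' : ℝ) < (a + Φ i)/θ + 1 := Int.ceil_lt_add_one _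
      have h2 : θ * k' < (a + Φ i) + θ := by
        rw [mul_comm]
        calc (k':ℝ) * θ < ((a + Φ i)/θ + 1) * θ := mul_lt_mul_of_pos_right h1 hθpos
          _ = (a + Φ i) + θ := by field_simp
      have h3 : θ ≤ τ i / 2 := by
        have e : θ = (4*Real.pi/(mm:ℝ))/2 := by rw [hθ]; ring
        rw [e]
        linarith
      linarith
    have hs₀ : θ * k' - Φ i ∈ Icc a (a + τ i / 2) := ⟨by linarith, by linarith⟩
    have hprop := ha (θ * k' - Φ i) hs₀
    set k : ℕ := (k' % (mm:ℤ)).toNat with hk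
    have hmodnn : 0 ≤ k' % (mm:ℤ) := Int.emod_nonneg k' (by exact_mod_cast hmpos'.ne')
    have hkrange : k ∈ Finset.range mm := by
      apply Finset.mem_range.mpr
      have h2 : k' % (mm:ℤ) < mm := Int.emod_lt_of_pos k' (by exact_mod_cast hmpos')
      omega
    have hr : ((k:ℕ) : ℝ) = ((k' % (mm:ℤ) : ℤ) : ℝ) := by
      rw [hk]
      exact_mod_cast congrArg (Int.cast : ℤ → ℝ) (Int.toNat_of_nonneg hmodnn)
    have hsplitk : θ * k' = 2*Real.pi*(k:ℝ)/mm + 2*Real.pi*((k' / (mm:ℤ) : ℤ) : ℝ) := by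
      have h0 : ((mm:ℤ) * (k' / (mm:ℤ)) + k' % (mm:ℤ) : ℤ) = k' := Int.mul_ediv_add_emod k' mm
      have h0' : ((mm:ℝ)) * ((k' / (mm:ℤ) : ℤ):ℝ) + ((k' % (mm:ℤ) : ℤ):ℝ) = (k':ℝ) := by
        exact_mod_cast congrArg (Int.cast : ℤ → ℝ) h0
      have hrw : (k':ℝ) = (mm:ℝ) * ((k' / (mm:ℤ) : ℤ):ℝ) + (k:ℝ) := by
        rw [hr]; exact h0'.symm
      rw [hθ, hrw]
      field_simp
      ring
    have hEeq : VisAux.E (2*Real.pi*(k:ℝ)/mm) = VisAux.E (θ * k') := by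
      rw [hsplitk, VisAux.E_periodic]
    refine ⟨k, hkrange, fun j hj => ?_⟩
    have h := hprop j hj
    rw [show θ * k' - Φ i + Φ i = θ * k' from by ring] at h
    rw [hEeq]
    exact h
  choose! κ hκmem hκprop using hsel
  have htel : ∀ k ∈ Finset.range mm,
      ∑ i ∈ Big.filter (fun i => κ i = k), (δ * (τ i / 6)) ≤ D := by
    intro k _
    apply VisAux.telescope p (VisAux.E (2*Real.pi*(k:ℝ)/mm)) (VisAux.norm_E _) D hDnorm
    · intro i hi
      exact Finset.ne_of_mem_erase (Finset.mem_filter.mp (Finset.mem_filter.mp hi).1).1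
    · intro i hi
      have := hτnn i
      positivity
    · intro i hi j hj
      have h1 : κ i = k := (Finset.mem_filter.mp hi).2
      have h2 := hκprop i (Finset.mem_filter.mp hi).1 j hj
      rw [h1] at h2
      exact h2
  have hbigsum : ∑ i ∈ Big, (δ * (τ i / 6)) ≤ (mm:ℝ) * D := by
    rw [← Finset.sum_fiberwise_of_maps_to hκmem (fun i => δ * (τ i / 6))]
    calc ∑ k ∈ Finset.range mm, ∑ i ∈ Big.filter (fun i => κ i = k), (δ * (τ i / 6))
        ≤ ∑ _k ∈ Finset.range mm, D := Finset.sum_le_sum htel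
      _ = (mm:ℝ) * D := by rw [Finset.sum_const, Finset.card_range, nsmul_eq_mul]
  have hbig' : ∑ i ∈ Big, τ i ≤ 6 * (mm:ℝ) * (C * Real.sqrt n) := by
    have e1 : ∑ i ∈ Big, (δ * (τ i / 6)) = (δ/6) * ∑ i ∈ Big, τ i := by
      rw [Finset.mul_sum]
      exact Finset.sum_congr rfl fun i _ => by ring
    rw [e1] at hbigsum
    have e2 : (mm:ℝ) * D = (δ/6) * (6 * (mm:ℝ) * (C * Real.sqrt n)) := by rw [hDdef]; ring
    rw [e2] at hbigsum
    exact le_of_mul_le_mul_left hbigsum (by positivity)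
  have hsmall : ∑ i ∈ (Finset.univ.erase (0:Fin n)).filter (fun i => ¬(4*Real.pi/mm ≤ τ i)), τ i
      ≤ (n:ℝ) * (4*Real.pi/mm) := by
    set Sm := (Finset.univ.erase (0:Fin n)).filter (fun i => ¬(4*Real.pi/mm ≤ τ i)) with hSm
    calc ∑ i ∈ Sm, τ i ≤ Sm.card • (4*Real.pi/mm) :=
          Finset.sum_le_card_nsmul _ _ _
            (fun i hi => (lt_of_not_ge (Finset.mem_filter.mp hi).2).le)
      _ = (Sm.card : ℝ) * (4*Real.pi/mm) := nsmul_eq_mul _ _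
      _ ≤ (n:ℝ) * (4*Real.pi/mm) := by
          apply mul_le_mul_of_nonneg_right _ (by positivity)
          have h1 : Sm.card ≤ n := by
            calc Sm.card ≤ (Finset.univ.erase (0:Fin n)).card := Finset.card_filter_le _ _
              _ ≤ (Finset.univ : Finset (Fin n)).card := Finset.card_le_card (Finset.erase_subset _ _)
              _ = n := by simp
          exact_mod_cast h1
  have hsplit := Finset.sum_filter_add_sum_filter_not (Finset.univ.erase (0:Fin n))
    (fun i => 4*Real.pi/mm ≤ τ i) τ
  have hsqrt : Real.sqrt n = (n:ℝ) ^ ((1:ℝ)/2) := Real.sqrt_eq_rpow _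
  have hns : (n:ℝ) ^ ((1:ℝ)/4) * (n:ℝ) ^ ((1:ℝ)/2) = (n:ℝ) ^ ((3:ℝ)/4) := by
    rw [← Real.rpow_add hnpos]; norm_num
  have h34 : (1:ℝ) ≤ (n:ℝ) ^ ((3:ℝ)/4) := Real.one_le_rpow hn1R (by norm_num)
  have hbound1 : 6 * (mm:ℝ) * (C * Real.sqrt n) ≤ 12 * C * (n:ℝ)^((3:ℝ)/4) := by
    rw [hsqrt]
    calc 6 * (mm:ℝ) * (C * (n:ℝ)^((1:ℝ)/2))
        ≤ 6 * (2*(n:ℝ)^((1:ℝ)/4)) * (C * (n:ℝ)^((1:ℝ)/2)) := by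
          apply mul_le_mul_of_nonneg_right _ (by positivity)
          linarith
      _ = 12 * C * ((n:ℝ)^((1:ℝ)/4) * (n:ℝ)^((1:ℝ)/2)) := by ring
      _ = 12 * C * (n:ℝ)^((3:ℝ)/4) := by rw [hns]
  have hbound2 : (n:ℝ) * (4*Real.pi/mm) ≤ 4*Real.pi*(n:ℝ)^((3:ℝ)/4) := by
    have h1 : (n:ℝ)/mm ≤ (n:ℝ)^((3:ℝ)/4) := by
      rw [div_le_iff₀ hmpos]
      calc (n:ℝ) = (n:ℝ)^((1:ℝ)) := (Real.rpow_one _).symm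
        _ = (n:ℝ)^((3:ℝ)/4) * (n:ℝ)^((1:ℝ)/4) := by rw [← Real.rpow_add hnpos]; norm_num
        _ ≤ (n:ℝ)^((3:ℝ)/4) * mm := mul_le_mul_of_nonneg_left hm1 (by positivity)
    calc (n:ℝ) * (4*Real.pi/mm) = 4*Real.pi * ((n:ℝ)/mm) := by ring
      _ ≤ 4*Real.pi*(n:ℝ)^((3:ℝ)/4) := mul_le_mul_of_nonneg_left h1 (by positivity)
  have h2π : 2*Real.pi ≤ 2*Real.pi*(n:ℝ)^((3:ℝ)/4) := by nlinarith
  have hfinal : (∑ i ∈ Finset.univ.erase (0 : Fin n), τ i)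
      = (∑ i ∈ Big, τ i) +
        ∑ i ∈ (Finset.univ.erase (0:Fin n)).filter (fun i => ¬(4*Real.pi/mm ≤ τ i)), τ i := by
    rw [hBigdef, hsplit]
  rw [hfinal]
  have e3 : (6 * Real.pi + 12 * C) * (n:ℝ)^((3:ℝ)/4)
      = 12 * C * (n:ℝ)^((3:ℝ)/4) + 4*Real.pi*(n:ℝ)^((3:ℝ)/4) + 2*Real.pi*(n:ℝ)^((3:ℝ)/4) := by
    ring
  rw [e3]
  linarith
end
end

section
/- For every positive integer n there exist n distinct points p_1, …, p_n in ℝ² forming a 4-dense set, such that with the stacking order given by this enumeration, liminf_{ε→0⁺} vis(εp_1, …, εp_n) ≥ n^{3/4}. -/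
open MeasureTheory Filter Set Metric
open scoped ENNReal NNReal Topology

noncomputable section

open scoped RealInnerProductSpace

namespace Spiral
open Real

/-- unit vector at angle `t` -/
def e (t : ℝ) : Pt := !₂[Real.cos t, Real.sin t]

lemma inner_ee (s t : ℝ) : ⟪e s, e t⟫ = Real.cos (s - t) := by
  simp [PiLp.inner_apply, e, Fin.sum_univ_two, Real.cos_sub]
  ring

lemma norm_e (t : ℝ) : ‖e t‖ = 1 := by
  have h : ⟪e t, e t⟫ = 1 := by rw [inner_ee]; simp
  have h2 : ‖e t‖ ^ 2 = 1 := by rw [← real_inner_self_eq_norm_sq, h]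
  nlinarith [norm_nonneg (e t)]

/-- the spiral points, `m = 1, 2, …` -/
def P (m : ℕ) : Pt := Real.sqrt m • e (2 * Real.sqrt m)

lemma norm_P (m : ℕ) : ‖P m‖ = Real.sqrt m := by
  rw [P, norm_smul, norm_e, mul_one, Real.norm_eq_abs,
    abs_of_nonneg (Real.sqrt_nonneg _)]

lemma inner_Pe (m : ℕ) (t : ℝ) : ⟪P m, e t⟫ = Real.sqrt m * Real.cos (2 * Real.sqrt m - t) := by
  rw [P, real_inner_smul_left, inner_ee]

lemma inner_PP (a b : ℕ) :
    ⟪P a, P b⟫ = Real.sqrt a * Real.sqrt b * Real.cos (2 * Real.sqrt a - 2 * Real.sqrt b) := by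
  conv_lhs => rw [show P b = Real.sqrt b • e (2 * Real.sqrt b) from rfl]
  rw [real_inner_smul_right, inner_Pe]; ring

lemma dist_sq_PP (a b : ℕ) :
    dist (P a) (P b) ^ 2 = (Real.sqrt a - Real.sqrt b) ^ 2
      + 2 * (Real.sqrt a * Real.sqrt b) * (1 - Real.cos (2 * Real.sqrt a - 2 * Real.sqrt b)) := by
  rw [dist_eq_norm, norm_sub_sq_real, inner_PP, norm_P, norm_P]
  ring


private lemma half_le_of_sq {D : ℝ} (hD0 : 0 ≤ D) (h : 1/4 ≤ D^2) : 1/2 ≤ D := by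
  nlinarith

lemma sep_aux {u v D : ℝ} (hu1 : 1 ≤ u) (huv : u < v) (hba : 1 ≤ v^2 - u^2)
    (hD0 : 0 ≤ D)
    (hD : D ^ 2 = (u - v)^2 + 2*(u*v)*(1 - Real.cos (2*u - 2*v))) :
    1/2 ≤ D := by
  obtain ⟨d, hd⟩ : ∃ d, d = v - u := ⟨_, rfl⟩
  have hd0 : 0 < d := by rw [hd]; linarith
  have hcos : Real.cos (2 * u - 2 * v) = Real.cos (2 * d) := by
    rw [show 2*u - 2*v = -(2*d) by rw [hd]; ring, Real.cos_neg]
  rw [hcos] at hD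
  rcases le_or_gt (1/2) d with h | h
  · have hc1 : Real.cos (2*d) ≤ 1 := Real.cos_le_one _
    have huv0 : 0 ≤ u * v := by nlinarith
    refine half_le_of_sq hD0 ?_
    have t3 : 0 ≤ 2*(u*v)*(1 - Real.cos (2*d)) := by
      have := mul_nonneg huv0 (by linarith : (0:ℝ) ≤ 1 - Real.cos (2*d))
      linarith [this]
    have t4 : (1/2:ℝ)^2 ≤ (u-v)^2 := by
      have : (u-v)^2 = d^2 := by rw [hd]; ring
      rw [this]
      have := mul_le_mul h h (by norm_num) (le_trans (by norm_num) h)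
      nlinarith [this]
    nlinarith [hD, t3, t4]
  · have hs1 : Real.sin d > d - d^3/4 := by have := Real.sin_gt_sub_cube hd0; nlinarith [pow_pos hd0 3]
    have hsin0 : 0 < Real.sin d := by nlinarith [mul_pos hd0 hd0]
    have hc2 : Real.cos (2*d) = 1 - 2 * Real.sin d ^ 2 := by
      rw [Real.cos_two_mul]
      have := Real.sin_sq_add_cos_sq d
      linarith
    rw [hc2] at hD
    have hkey : Real.sin d ≥ d * (15/16) := by nlinarith [mul_pos hd0 hd0]
    have hds : d * (u + v) = v^2 - u^2 := by rw [hd]; ring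
    have hS : 2 ≤ u + v := by linarith
    have hds1 : 1 ≤ d * (u + v) := by rw [hds]; exact hba
    have hsin2 : Real.sin d ^ 2 ≥ (225/256) * d^2 := by nlinarith [mul_pos hd0 hd0, hkey, hsin0]
    have he : D ^ 2 = d^2 + ((u+v)^2 - d^2) * Real.sin d ^ 2 := by
      rw [hD, hd]; ring
    have hsle : Real.sin d ^ 2 ≤ 1 := by
      nlinarith [Real.sin_le_one d]
    have t1 : 0 ≤ d^2 * (1 - Real.sin d ^ 2) :=
      mul_nonneg (sq_nonneg d) (by linarith)
    have t2 : 0 ≤ (u+v)^2 * (Real.sin d ^2 - (225/256) * d^2) :=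
      mul_nonneg (sq_nonneg (u+v)) (by linarith)
    have hq : D ^ 2 ≥ (225/256) * (d * (u+v))^2 := by
      have : (225/256) * (d * (u+v))^2 + d^2 * (1 - Real.sin d ^ 2)
          + (u+v)^2 * (Real.sin d ^2 - (225/256) * d^2)
          = d^2 + ((u+v)^2 - d^2) * Real.sin d ^ 2 := by ring
      linarith [he, t1, t2, this.ge]
    have hsq : (1:ℝ) ≤ (d*(u+v))^2 := by
      have h2 := mul_le_mul hds1 hds1 (by norm_num) (le_trans (by norm_num) hds1)
      calc (1:ℝ) = 1*1 := by norm_num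
        _ ≤ (d*(u+v)) * (d*(u+v)) := h2
        _ = (d*(u+v))^2 := by ring
    refine half_le_of_sq hD0 ?_
    linarith [hq, hsq]


/-- Core cone inequality: if `ρ < r`, `r·w² ≤ 1.21`, `w ≤ 0.93`, `0 ≤ ψ ≤ w`,
then `r cos ψ ≥ ρ cos (2r - 2ρ + ψ)`. -/
lemma cone_aux {r ρ ψ w : ℝ} (hρ0 : 0 ≤ ρ) (hρr : ρ < r)
    (hrw : r * w^2 ≤ 121/100) (hw93 : w ≤ 93/100) (hψ0 : 0 ≤ ψ) (hψw : ψ ≤ w) :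
    0 ≤ r * Real.cos ψ - ρ * Real.cos (2*r - 2*ρ + ψ) := by
  have hw0 : 0 ≤ w := le_trans hψ0 hψw
  have hr0 : 0 < r := lt_of_le_of_lt hρ0 hρr
  have hcosψ : 1 - ψ^2/2 ≤ Real.cos ψ := Real.one_sub_sq_div_two_le_cos
  have hψ93 : ψ ≤ 93/100 := le_trans hψw hw93
  have hcosψ0 : (0:ℝ) < Real.cos ψ := by nlinarith [hcosψ]
  set g := 2*r - 2*ρ with hg
  have hg0 : 0 < g := by rw [hg]; linarith
  rcases le_or_gt (Real.cos (g + ψ)) 0 with hA | hA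
  · nlinarith [mul_nonneg hρ0 (neg_nonneg.2 hA), mul_pos hr0 hcosψ0]
  rcases le_or_gt (Real.cos (g + ψ)) (Real.cos ψ) with hA2 | hB
  · have h1 : ρ * Real.cos (g + ψ) ≤ r * Real.cos (g + ψ) :=
      mul_le_mul_of_nonneg_right hρr.le hA.le
    have h2 : r * Real.cos (g + ψ) ≤ r * Real.cos ψ :=
      mul_le_mul_of_nonneg_left hA2 hr0.le
    linarith
  · -- case B: wrapped around
    set m : ℤ := round ((g + ψ) / (2*π)) with hm
    have hπ : (3.141592:ℝ) < π := Real.pi_gt_d6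
    have hper : Real.cos ((g + ψ) - m * (2*π)) = Real.cos (g + ψ) := by
      rw [Real.cos_sub_int_mul_two_pi]
    have h2π : (0:ℝ) < 2*π := by linarith
    have habs : |(g + ψ) - m * (2*π)| ≤ π := by
      have h1 : |(g + ψ)/(2*π) - m| ≤ 1/2 := abs_sub_round _
      have heq : |(g + ψ) - m * (2*π)| = |2*π| * |(g + ψ)/(2*π) - m| := by
        rw [← abs_mul]
        congr 1
        field_simp
      rw [heq, abs_of_pos h2π]
      have := mul_le_mul_of_nonneg_left h1 h2π.le
      linarith
    have hlt : |(g + ψ) - m * (2*π)| < ψ := by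
      by_contra hc
      push_neg at hc
      have hcc : Real.cos |(g + ψ) - m * (2*π)| = Real.cos (g + ψ) := by
        rw [Real.cos_abs, hper]
      have := Real.cos_le_cos_of_nonneg_of_le_pi hψ0 habs hc
      rw [hcc] at this
      linarith
    have hm1 : (1:ℤ) ≤ m := by
      by_contra hc
      push_neg at hc
      have hm0 : (m:ℝ) ≤ 0 := by exact_mod_cast Int.lt_add_one_iff.mp (by exact_mod_cast hc)
      have : ψ < (g + ψ) - m * (2*π) := by nlinarith [mul_nonpos_of_nonpos_of_nonneg hm0 h2π.le]
      have h2 := le_abs_self ((g + ψ) - m * (2*π))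
      linarith
    have hmR : (1:ℝ) ≤ (m:ℝ) := by exact_mod_cast hm1
    -- r - ρ ≥ π - ψ
    have hgl : g - m * (2*π) > -(2*ψ) := by
      have := neg_abs_le ((g + ψ) - m * (2*π))
      linarith [hlt]
    have hrρ : π - ψ ≤ r - ρ := by
      have : (m:ℝ) * (2*π) ≥ 2*π := by
        have := mul_le_mul_of_nonneg_right hmR h2π.le
        linarith
      have hgg : g > 2*π - 2*ψ := by linarith
      have : 2*r - 2*ρ > 2*π - 2*ψ := by rw [← hg]; exact hgg
      linarith
    -- final estimate
    have hc1 : Real.cos (g+ψ) ≤ 1 := Real.cos_le_one _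
    have hw2 : ψ^2 ≤ w^2 := pow_le_pow_left₀ hψ0 hψw 2
    have hw93sq : w^2 ≤ (93/100)^2 := pow_le_pow_left₀ hw0 hw93 2
    have hc3 : (56755/100000:ℝ) ≤ Real.cos (g+ψ) := by linarith [hB, hcosψ, hw2, hw93sq]
    have hc4 : (2211592/1000000:ℝ) ≤ r - ρ := by linarith [hrρ, hπ, hψ93]
    have tmain : (2211592/1000000:ℝ) * (56755/100000) ≤ (r - ρ) * Real.cos (g+ψ) :=
      mul_le_mul hc4 hc3 (by norm_num) (by linarith)
    have tr : r * Real.cos ψ - r * Real.cos (g+ψ) ≥ -(r * w^2)/2 := by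
      have h5 : r * ψ^2 ≤ r * w^2 := mul_le_mul_of_nonneg_left hw2 hr0.le
      have h6 := mul_le_mul_of_nonneg_left hcosψ hr0.le
      have h7 := mul_le_mul_of_nonneg_left hc1 hr0.le
      linarith [h5, h6, h7]
    linarith [tmain, tr, hrw]


def w (i : ℕ) : ℝ := (11/10) * (i:ℝ) ^ (-(1/4) : ℝ)

lemma two_rpow : (110/93 : ℝ) ≤ (2:ℝ) ^ ((1/4) : ℝ) := by
  by_contra hc
  push_neg at hc
  have hp : (0:ℝ) < (2:ℝ) ^ ((1/4) : ℝ) := Real.rpow_pos_of_pos (by norm_num) _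
  have h4 : ((2:ℝ) ^ ((1/4) : ℝ)) ^ (4:ℕ) = 2 := by
    rw [← Real.rpow_natCast ((2:ℝ) ^ ((1/4):ℝ)) 4, ← Real.rpow_mul (by norm_num)]
    norm_num
  have := pow_lt_pow_left₀ hc hp.le (n := 4) (by norm_num)
  rw [h4] at this
  norm_num at this

lemma w_le (i : ℕ) (hi : 2 ≤ i) : w i ≤ 93/100 := by
  have hi0 : (0:ℝ) < i := by positivity
  have h2i : (2:ℝ) ≤ i := by exact_mod_cast hi
  have h1 : (2:ℝ) ^ ((1/4):ℝ) ≤ (i:ℝ) ^ ((1/4):ℝ) :=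
    Real.rpow_le_rpow (by norm_num) h2i (by norm_num)
  have hp2 : (0:ℝ) < (2:ℝ) ^ ((1/4) : ℝ) := Real.rpow_pos_of_pos (by norm_num) _
  have hneg : (i:ℝ) ^ (-(1/4) : ℝ) = ((i:ℝ) ^ ((1/4):ℝ))⁻¹ := by
    rw [← Real.rpow_neg_one, ← Real.rpow_mul hi0.le]
    norm_num
  rw [w, hneg]
  have h3 : ((i:ℝ) ^ ((1/4):ℝ))⁻¹ ≤ ((2:ℝ) ^ ((1/4):ℝ))⁻¹ :=
    inv_anti₀ hp2 h1
  have h4 : ((2:ℝ) ^ ((1/4):ℝ))⁻¹ ≤ 93/110 := by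
    rw [inv_le_comm₀ (by positivity) (by norm_num)]
    calc (93/110:ℝ)⁻¹ = 110/93 := by norm_num
      _ ≤ (2:ℝ) ^ ((1/4):ℝ) := two_rpow
  calc (11/10) * ((i:ℝ) ^ ((1/4):ℝ))⁻¹ ≤ (11/10) * (93/110) := by nlinarith [h3, h4]
    _ ≤ 93/100 := by norm_num

lemma w_nonneg (i : ℕ) : 0 ≤ w i := by
  rw [w]; positivity

lemma sqrt_mul_w_sq (i : ℕ) (hi : 1 ≤ i) : Real.sqrt i * (w i)^2 = 121/100 := by
  have hi0 : (0:ℝ) < i := by positivity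
  rw [w, Real.sqrt_eq_rpow, mul_pow, ← Real.rpow_natCast ((i:ℝ) ^ (-(1/4):ℝ)) 2,
    ← Real.rpow_mul hi0.le]
  rw [show (-(1/4):ℝ) * (2:ℕ) = -(1/2) by push_cast; ring]
  rw [show ((i:ℝ) ^ ((1/2):ℝ) * ((11/10:ℝ)^2 * (i:ℝ) ^ (-(1/2):ℝ)))
      = (11/10:ℝ)^2 * ((i:ℝ) ^ ((1/2):ℝ) * (i:ℝ) ^ (-(1/2):ℝ)) by ring]
  rw [← Real.rpow_add hi0]
  norm_num

/-- The cone property: the visible direction arc of `P i` against inner points. -/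
lemma cone {j i : ℕ} (hj : 1 ≤ j) (hji : j < i) {ψ : ℝ} (hψ0 : 0 ≤ ψ) (hψw : ψ ≤ w i) :
    0 ≤ ⟪P i - P j, e (2 * Real.sqrt i + ψ)⟫ := by
  have hi : 2 ≤ i := by omega
  have hji' : (j:ℝ) < i := by exact_mod_cast hji
  have hρr : Real.sqrt j < Real.sqrt i := Real.sqrt_lt_sqrt (by positivity) hji'
  rw [inner_sub_left, inner_Pe, inner_Pe]
  have e1 : 2 * Real.sqrt i - (2 * Real.sqrt i + ψ) = -ψ := by ring
  have e2 : 2 * Real.sqrt j - (2 * Real.sqrt i + ψ)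
      = -((2 * Real.sqrt i - 2 * Real.sqrt j) + ψ) := by ring
  rw [e1, e2, Real.cos_neg, Real.cos_neg]
  exact cone_aux (Real.sqrt_nonneg _) hρr
    (le_of_eq (sqrt_mul_w_sq i (by omega))) (w_le i hi) hψ0 hψw


lemma lip_inner (t : ℝ) : LipschitzWith 1 (fun x : Pt => ⟪x, e t⟫) := by
  refine LipschitzWith.of_dist_le_mul (fun x y => ?_)
  rw [Real.dist_eq, ← inner_sub_left]
  calc |⟪x - y, e t⟫| ≤ ‖x - y‖ * ‖e t‖ := abs_real_inner_le_norm _ _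
    _ = 1 * dist x y := by rw [norm_e, dist_eq_norm]; ring

lemma meas_lower {S : Set Pt} {t a b : ℝ}
    (h : Set.Ioo a b ⊆ (fun x : Pt => ⟪x, e t⟫) '' S) :
    ENNReal.ofReal (b - a) ≤ μH[1] S := by
  calc ENNReal.ofReal (b - a) = volume (Set.Ioo a b) := (Real.volume_Ioo).symm
    _ = μH[1] (Set.Ioo a b) := by rw [MeasureTheory.hausdorffMeasure_real]
    _ ≤ μH[1] ((fun x : Pt => ⟪x, e t⟫) '' S) := measure_mono h
    _ ≤ (1:ℝ≥0)^(1:ℝ) * μH[1] S := (lip_inner t).hausdorffMeasure_image_le (by norm_num) S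
    _ = μH[1] S := by simp


lemma w_pos (k : ℕ) (hk : 1 ≤ k) : 0 < w k := by
  have : (0:ℝ) < k := by positivity
  rw [w]
  positivity


lemma sin_w_ge (k : ℕ) (hk : 2 ≤ k) : (39/50) * w k ≤ Real.sin (w k) := by
  have h0 : 0 < w k := w_pos k (by omega)
  have h93 : w k ≤ 93/100 := w_le k hk
  have h1 : Real.sin (w k) > w k - (w k)^3/4 := by have := Real.sin_gt_sub_cube h0; nlinarith [pow_pos h0 3]
  nlinarith [sq_nonneg (w k), mul_pos h0 h0]

/-- Bernoulli-type bound : `(k+1)^{3/4} - k^{3/4} ≤ (3/4)·k^{-1/4}`. -/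
lemma rpow34 (k : ℕ) (hk : 1 ≤ k) :
    ((k:ℝ)+1) ^ ((3:ℝ)/4) - (k:ℝ) ^ ((3:ℝ)/4) ≤ (3/4) * (k:ℝ) ^ (-(1/4) : ℝ) := by
  have hk0 : (0:ℝ) < k := by positivity
  have hk1 : (1:ℝ) ≤ k := by exact_mod_cast hk
  have key : ((k:ℝ)+1) ^ ((3:ℝ)/4) ≤ (k:ℝ) ^ (-(1/4) : ℝ) * ((k:ℝ) + 3/4) := by
    have hL0 : (0:ℝ) ≤ ((k:ℝ)+1) ^ ((3:ℝ)/4) := Real.rpow_nonneg (by linarith) _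
    have hR0 : (0:ℝ) ≤ (k:ℝ) ^ (-(1/4) : ℝ) * ((k:ℝ) + 3/4) := by
      have := Real.rpow_nonneg hk0.le (-(1/4) : ℝ)
      nlinarith
    have h4 : (((k:ℝ)+1) ^ ((3:ℝ)/4)) ^ (4:ℕ) ≤ ((k:ℝ) ^ (-(1/4) : ℝ) * ((k:ℝ) + 3/4)) ^ (4:ℕ) := by
      have e1 : (((k:ℝ)+1) ^ ((3:ℝ)/4)) ^ (4:ℕ) = ((k:ℝ)+1) ^ (3:ℕ) := by
        rw [← Real.rpow_natCast (((k:ℝ)+1) ^ ((3:ℝ)/4)) 4, ← Real.rpow_mul (by linarith),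
          show ((3:ℝ)/4 * ((4:ℕ):ℝ) : ℝ) = ((3:ℕ):ℝ) by push_cast; ring,
          Real.rpow_natCast]
      have e2 : ((k:ℝ) ^ (-(1/4) : ℝ) * ((k:ℝ) + 3/4)) ^ (4:ℕ)
          = ((k:ℝ))⁻¹ * ((k:ℝ) + 3/4) ^ (4:ℕ) := by
        rw [mul_pow, ← Real.rpow_natCast ((k:ℝ) ^ (-(1/4):ℝ)) 4, ← Real.rpow_mul hk0.le]
        norm_num [Real.rpow_neg_one]
      rw [e1, e2]
      rw [← sub_nonneg]
      have expand : ((k:ℝ))⁻¹ * ((k:ℝ) + 3/4) ^ (4:ℕ) - ((k:ℝ)+1) ^ (3:ℕ)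
          = ((k:ℝ))⁻¹ * (((k:ℝ) + 3/4)^4 - (k:ℝ) * ((k:ℝ)+1)^3) := by
        field_simp
      rw [expand]
      have hpoly : (0:ℝ) ≤ ((k:ℝ) + 3/4)^4 - (k:ℝ) * ((k:ℝ)+1)^3 := by nlinarith [hk1, hk0]
      positivity
    exact le_of_pow_le_pow_left₀ (by norm_num) hR0 h4
  have hsplit : (k:ℝ) ^ (-(1/4) : ℝ) * (k:ℝ) = (k:ℝ) ^ ((3:ℝ)/4) := by
    have h := Real.rpow_add hk0 (-(1/4) : ℝ) 1
    rw [Real.rpow_one] at h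
    rw [← h]
    norm_num
  nlinarith [key, hsplit]

/-- summation: `∑_{k=2}^{n} k^{-1/4} ≥ (4/3)((n+1)^{3/4} - 2^{3/4})`. -/
lemma sum_rpow (n : ℕ) :
    (4/3) * (((n:ℝ)+1) ^ ((3:ℝ)/4) - (2:ℝ) ^ ((3:ℝ)/4))
      ≤ ∑ k ∈ Finset.Icc 2 n, (k:ℝ) ^ (-(1/4) : ℝ) := by
  induction n with
  | zero =>
    simp
    have : (1:ℝ) ≤ (2:ℝ) ^ ((3:ℝ)/4) := by
      rw [show (1:ℝ) = (1:ℝ) ^ ((3:ℝ)/4) by simp]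
      exact Real.rpow_le_rpow (by norm_num) (by norm_num) (by norm_num)
    nlinarith [this]
  | succ n ih =>
    rcases Nat.lt_or_ge n 1 with h | h
    · interval_cases n
      · norm_num
    · have hstep := rpow34 (n+1) (by omega)
      have hins : Finset.Icc 2 (n+1) = insert (n+1) (Finset.Icc 2 n) := by
        exact (Finset.insert_Icc_right_eq_Icc_add_one (by omega)).symm
      rw [hins, Finset.sum_insert (by simp)]
      push_cast at hstep ⊢
      linarith [ih, hstep]


lemma arc_mem {nn : ℕ} (p : Fin nn → Pt) {ε : ℝ} (hε : 0 < ε) (i : Fin nn) (t : ℝ)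
    (hcone : ∀ j : Fin nn, j < i → 0 ≤ ⟪p i - p j, e t⟫) :
    (ε • p i + e t) ∈
      {x : Pt | dist x (ε • p i) = 1 ∧ ∀ j : Fin nn, j < i → 1 ≤ dist x (ε • p j)} := by
  constructor
  · rw [dist_self_add_left, norm_e]
  · intro j hj
    have h1 : ε • p i + e t - ε • p j = ε • (p i - p j) + e t := by
      rw [smul_sub]; abel
    rw [dist_eq_norm, h1]
    have h2 := norm_add_sq_real (ε • (p i - p j)) (e t)
    have h3 : 0 ≤ ⟪ε • (p i - p j), e t⟫ := by
      rw [real_inner_smul_left]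
      exact mul_nonneg hε.le (hcone j hj)
    have h4 : (1:ℝ) ≤ ‖ε • (p i - p j) + e t‖^2 := by
      rw [h2, norm_e]
      nlinarith [sq_nonneg ‖ε • (p i - p j)‖]
    nlinarith [norm_nonneg (ε • (p i - p j) + e t)]

/-- projection value of an arc point -/
lemma proj_val (m : ℕ) (c : Pt) (ψ : ℝ) (hc : ∃ ε : ℝ, c = ε • P m) :
    ⟪c + e (2 * Real.sqrt m + ψ), e (2 * Real.sqrt m + π/2)⟫ = Real.sin ψ := by
  obtain ⟨ε, rfl⟩ := hc
  rw [inner_add_left, real_inner_smul_left, inner_Pe, inner_ee]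
  rw [show 2 * Real.sqrt m - (2 * Real.sqrt m + π/2) = -(π/2) by ring,
    show 2 * Real.sqrt m + ψ - (2 * Real.sqrt m + π/2) = ψ - π/2 by ring,
    Real.cos_neg, Real.cos_pi_div_two, Real.cos_sub_pi_div_two]
  ring

lemma bound_pos {nn : ℕ} {ε : ℝ} (hε : 0 < ε) (i : Fin nn) (hi : 1 ≤ i.val) :
    ENNReal.ofReal (Real.sin (w (i.val+1))) ≤
      μH[1] {x : Pt | dist x (ε • P (i.val+1)) = 1 ∧
        ∀ j : Fin nn, j < i → 1 ≤ dist x (ε • P (j.val+1))} := by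
  set k := i.val + 1 with hk
  have hk2 : 2 ≤ k := by omega
  have hπ : (3.141592:ℝ) < π := Real.pi_gt_d6
  have hw93 : w k ≤ 93/100 := w_le k hk2
  have hw0 : 0 < w k := w_pos k (by omega)
  have hwπ : w k ≤ π/2 := by linarith
  have h0 : ENNReal.ofReal (Real.sin (w k)) = ENNReal.ofReal (Real.sin (w k) - 0) := by
    norm_num
  rw [h0]
  refine meas_lower (t := 2 * Real.sqrt k + π/2) ?_
  rintro y ⟨hy0, hy1⟩
  have hy1' : y ≤ 1 := le_trans hy1.le (Real.sin_le_one _)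
  have hyneg : -1 ≤ y := by linarith
  set ψ := Real.arcsin y with hψ
  have hψ0 : 0 ≤ ψ := Real.arcsin_nonneg.2 hy0.le
  have hψw : ψ ≤ w k := by
    have := Real.monotone_arcsin (le_of_lt hy1)
    rwa [Real.arcsin_sin (by linarith) hwπ] at this
  refine ⟨(ε • P k) + e (2 * Real.sqrt k + ψ), ?_, ?_⟩
  · exact arc_mem (fun j : Fin nn => P (j.val+1)) hε i _
      (fun j hj => cone (by omega) (Nat.add_lt_add_right hj 1) hψ0 hψw)
  · dsimp only
    rw [proj_val k _ ψ ⟨ε, rfl⟩]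
    exact Real.sin_arcsin hyneg hy1'

lemma bound_zero {nn : ℕ} {ε : ℝ} (hε : 0 < ε) (i : Fin nn) (hi : i.val = 0) :
    ENNReal.ofReal 4 ≤
      μH[1] {x : Pt | dist x (ε • P (i.val+1)) = 1 ∧
        ∀ j : Fin nn, j < i → 1 ≤ dist x (ε • P (j.val+1))} := by
  have hvac : ∀ j : Fin nn, j < i → False := by
    intro j hj
    rw [Fin.lt_def, hi] at hj
    omega
  set c : Pt := ε • P (i.val+1) with hc
  set θ : ℝ := 2 * Real.sqrt ((i.val+1 : ℕ) : ℝ) with hθ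
  set S : Set Pt := {x : Pt | dist x (ε • P (i.val+1)) = 1 ∧
        ∀ j : Fin nn, j < i → 1 ≤ dist x (ε • P (j.val+1))} with hS
  set H : Set Pt := (fun x : Pt => ⟪x - c, e θ⟫) ⁻¹' (Set.Ici 0) with hH
  have hHm : MeasurableSet H := by
    refine measurableSet_preimage ?_ measurableSet_Ici
    exact ((lip_inner θ).continuous.comp (continuous_id.sub continuous_const)).measurable
  have hsplit := measure_inter_add_diff (μ := μH[1]) S hHm
  have harc : ∀ ψ : ℝ, (c + e (θ + ψ)) ∈ S := by
    intro ψ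
    rw [hS, hc]
    exact arc_mem (fun j : Fin nn => P (j.val+1)) hε i _
      (fun j hj => absurd (hvac j hj) not_false)
  have hup : ENNReal.ofReal 2 ≤ μH[1] (S ∩ H) := by
    have h2 : ENNReal.ofReal 2 = ENNReal.ofReal (1 - (-1)) := by norm_num
    rw [h2]
    refine meas_lower (t := θ + π/2) ?_
    rintro y ⟨hy0, hy1⟩
    refine ⟨c + e (θ + Real.arcsin y), ⟨harc _, ?_⟩, ?_⟩
    · rw [hH, Set.mem_preimage, add_sub_cancel_left, inner_ee]
      rw [show θ + Real.arcsin y - θ = Real.arcsin y by ring]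
      exact Real.cos_arcsin_nonneg y
    · dsimp only
      rw [hθ, proj_val (i.val+1) c (Real.arcsin y) ⟨ε, hc⟩]
      exact Real.sin_arcsin hy0.le hy1.le
  have hdown : ENNReal.ofReal 2 ≤ μH[1] (S \ H) := by
    have h2 : ENNReal.ofReal 2 = ENNReal.ofReal (1 - (-1)) := by norm_num
    rw [h2]
    refine meas_lower (t := θ + π/2) ?_
    rintro y ⟨hy0, hy1⟩
    refine ⟨c + e (θ + (π - Real.arcsin y)), ⟨harc _, ?_⟩, ?_⟩
    · rw [hH, Set.mem_preimage, add_sub_cancel_left, inner_ee]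
      rw [show θ + (π - Real.arcsin y) - θ = π - Real.arcsin y by ring,
        Real.cos_pi_sub, Real.cos_arcsin]
      simp only [Set.mem_Ici, not_le]
      have : 0 < Real.sqrt (1 - y^2) := Real.sqrt_pos.2 (by nlinarith)
      linarith
    · dsimp only
      rw [hθ, proj_val (i.val+1) c (π - Real.arcsin y) ⟨ε, hc⟩, Real.sin_pi_sub]
      exact Real.sin_arcsin hy0.le hy1.le
  calc ENNReal.ofReal 4 = ENNReal.ofReal 2 + ENNReal.ofReal 2 := by
        rw [← ENNReal.ofReal_add] <;> norm_num
    _ ≤ μH[1] (S ∩ H) + μH[1] (S \ H) := add_le_add hup hdown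
    _ = μH[1] S := hsplit


lemma sin_w_nonneg (k : ℕ) (hk : 2 ≤ k) : 0 ≤ Real.sin (w k) := by
  have h1 := sin_w_ge k hk
  have h2 := w_pos k (by omega)
  nlinarith

lemma sum_ind (n : ℕ) (hn : 1 ≤ n) :
    4 + (429/500) * ∑ k ∈ Finset.Icc 2 n, (k:ℝ) ^ (-(1/4) : ℝ)
      ≤ ∑ i ∈ Finset.range n, (if i = 0 then (4:ℝ) else Real.sin (w (i+1))) := by
  induction n with
  | zero => omega
  | succ n ih =>
    rcases Nat.lt_or_ge n 1 with h | h
    · interval_cases n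
      simp
    · have hins : Finset.Icc 2 (n+1) = insert (n+1) (Finset.Icc 2 n) :=
        (Finset.insert_Icc_right_eq_Icc_add_one (by omega)).symm
      rw [hins, Finset.sum_insert (by simp), Finset.sum_range_succ,
        if_neg (by omega : ¬ n = 0)]
      have h1 := sin_w_ge (n+1) (by omega)
      have h2 : w (n+1) = (11/10) * ((n+1:ℕ):ℝ) ^ (-(1/4) : ℝ) := rfl
      have h5 : (39/50) * w (n+1) = (429/500) * ((n+1:ℕ):ℝ) ^ (-(1/4) : ℝ) := by
        rw [h2]; ring
      linarith [ih h, h1, h5]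

lemma two_rpow34 : (2:ℝ) ^ ((3:ℝ)/4) ≤ 17/10 := by
  by_contra hc
  push_neg at hc
  have hp : (0:ℝ) < (2:ℝ) ^ ((3:ℝ)/4) := Real.rpow_pos_of_pos (by norm_num) _
  have h4 : ((2:ℝ) ^ ((3:ℝ)/4)) ^ (4:ℕ) = 8 := by
    rw [← Real.rpow_natCast ((2:ℝ) ^ ((3:ℝ)/4)) 4, ← Real.rpow_mul (by norm_num),
      show ((3:ℝ)/4 * ((4:ℕ):ℝ) : ℝ) = ((3:ℕ):ℝ) by push_cast; ring,
      Real.rpow_natCast]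
    norm_num
  have := pow_lt_pow_left₀ hc (by norm_num) (n := 4) (by norm_num)
  rw [h4] at this
  norm_num at this

lemma sum_lower (n : ℕ) (hn : 0 < n) :
    (n:ℝ) ^ ((3:ℝ)/4)
      ≤ ∑ i ∈ Finset.range n, (if i = 0 then (4:ℝ) else Real.sin (w (i+1))) := by
  have h1 := sum_ind n hn
  have h2 := sum_rpow n
  have h3 : (n:ℝ) ^ ((3:ℝ)/4) ≤ ((n:ℝ)+1) ^ ((3:ℝ)/4) :=
    Real.rpow_le_rpow (by positivity) (by linarith) (by norm_num)
  have h4 := two_rpow34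
  have h5 : (0:ℝ) ≤ (n:ℝ) ^ ((3:ℝ)/4) := Real.rpow_nonneg (by positivity) _
  nlinarith [h1, h2, h3, h4, h5]



lemma sep {a b : ℕ} (ha : 1 ≤ a) (hab : a < b) : 1/2 ≤ dist (P a) (P b) := by
  have hb : 1 ≤ b := le_trans ha hab.le
  refine sep_aux (u := Real.sqrt a) (v := Real.sqrt b) ?_ ?_ ?_ dist_nonneg (dist_sq_PP a b)
  · rw [show (1:ℝ) = Real.sqrt 1 by simp]
    exact Real.sqrt_le_sqrt (by exact_mod_cast ha)
  · exact Real.sqrt_lt_sqrt (by positivity) (by exact_mod_cast hab)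
  · rw [Real.sq_sqrt (by positivity), Real.sq_sqrt (by positivity)]
    have : (a:ℝ) + 1 ≤ b := by exact_mod_cast hab
    linarith

lemma sep' {a b : ℕ} (ha : 1 ≤ a) (hb : 1 ≤ b) (hne : a ≠ b) : 1/2 ≤ dist (P a) (P b) := by
  rcases lt_or_gt_of_ne hne with h | h
  · exact sep ha h
  · rw [dist_comm]; exact sep hb h

lemma dist_le {a b n : ℕ} (han : a ≤ n) (hbn : b ≤ n) :
    dist (P a) (P b) ≤ 2 * Real.sqrt n := by
  have h1 : dist (P a) (P b) ≤ ‖P a‖ + ‖P b‖ := dist_le_norm_add_norm _ _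
  rw [norm_P, norm_P] at h1
  have h2 : Real.sqrt a ≤ Real.sqrt n := Real.sqrt_le_sqrt (by exact_mod_cast han)
  have h3 : Real.sqrt b ≤ Real.sqrt n := Real.sqrt_le_sqrt (by exact_mod_cast hbn)
  linarith

lemma vis_lower {nn : ℕ} (hn : 0 < nn) {ε : ℝ} (hε : 0 < ε) :
    ENNReal.ofReal ((nn:ℝ) ^ ((3:ℝ)/4)) ≤ vis (fun i : Fin nn => ε • P (i.val+1)) := by
  have hterm : ∀ i : Fin nn,
      ENNReal.ofReal (if (i:ℕ) = 0 then (4:ℝ) else Real.sin (w (i.val+1))) ≤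
      μH[1] {x : Pt | dist x (ε • P (i.val+1)) = 1 ∧
        ∀ j : Fin nn, j < i → 1 ≤ dist x (ε • P (j.val+1))} := by
    intro i
    rcases Nat.eq_zero_or_pos i.val with h0 | h1
    · rw [if_pos h0]; exact bound_zero hε i h0
    · rw [if_neg (by omega)]; exact bound_pos hε i h1
  calc ENNReal.ofReal ((nn:ℝ) ^ ((3:ℝ)/4))
      ≤ ENNReal.ofReal (∑ i ∈ Finset.range nn,
          (if i = 0 then (4:ℝ) else Real.sin (w (i+1)))) :=
        ENNReal.ofReal_le_ofReal (sum_lower nn hn)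
    _ = ∑ i ∈ Finset.range nn,
          ENNReal.ofReal (if i = 0 then (4:ℝ) else Real.sin (w (i+1))) := by
        rw [ENNReal.ofReal_sum_of_nonneg]
        intro i hi
        split
        · norm_num
        · exact sin_w_nonneg _ (by omega)
    _ = ∑ i : Fin nn, ENNReal.ofReal
          (if (i:ℕ) = 0 then (4:ℝ) else Real.sin (w (i.val+1))) := by
        rw [← Fin.sum_univ_eq_sum_range]
    _ ≤ ∑ i : Fin nn, μH[1] {x : Pt | dist x (ε • P (i.val+1)) = 1 ∧
          ∀ j : Fin nn, j < i → 1 ≤ dist x (ε • P (j.val+1))} :=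
        Finset.sum_le_sum (fun i _ => hterm i)
    _ = vis (fun i : Fin nn => ε • P (i.val+1)) := by rw [vis]

end Spiral

/-- a 4-dense `n`-point set and a stacking order with
`liminf_{ε→0⁺} vis(εp) ≥ n^{3/4}`. -/
theorem exists_cDense_liminf_vis_ge (n : ℕ) (hn : 0 < n) :
    ∃ p : Fin n → Pt, Function.Injective p ∧ CDense 4 p ∧
      ENNReal.ofReal ((n : ℝ) ^ ((3 : ℝ) / 4)) ≤
        Filter.liminf (fun ε : ℝ => vis (fun i => ε • p i)) (𝓝[>] (0 : ℝ)) := by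
  classical
  refine ⟨fun i => Spiral.P (i.val+1), ?_, ?_, ?_⟩
  · intro a b hab
    by_contra hne
    have h := Spiral.sep' (a := a.val+1) (b := b.val+1) (by omega) (by omega)
      (fun h => hne (Fin.ext (by omega)))
    have hab' : Spiral.P (a.val+1) = Spiral.P (b.val+1) := hab
    rw [hab', dist_self] at h
    norm_num at h
  · intro i j k l hkl
    have h1 : dist (Spiral.P (i.val+1)) (Spiral.P (j.val+1)) ≤ 2 * Real.sqrt n :=
      Spiral.dist_le (by omega) (by omega)
    have h2 : 1/2 ≤ dist (Spiral.P (k.val+1)) (Spiral.P (l.val+1)) :=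
      Spiral.sep' (by omega) (by omega)
        (fun h => hkl (Fin.ext (by omega)))
    have hs : (0:ℝ) ≤ Real.sqrt n := Real.sqrt_nonneg _
    calc dist (Spiral.P (i.val+1)) (Spiral.P (j.val+1)) ≤ 2 * Real.sqrt n := h1
      _ = 4 * Real.sqrt n * (1/2) := by ring
      _ ≤ 4 * Real.sqrt n * dist (Spiral.P (k.val+1)) (Spiral.P (l.val+1)) := by
          apply mul_le_mul_of_nonneg_left h2
          positivity
  · rw [Filter.liminf_eq]
    apply le_sSup
    refine eventually_nhdsWithin_of_forall (fun ε hε => ?_)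
    exact Spiral.vis_lower hn hε
end
end

section
/- Every set of n distinct points in ℝ² admits an enumeration (stacking order) p_1, …, p_n such that vis(p_1, …, p_n) ≥ (π/2) · ⌈n^{1/2}⌉. Consequently, v(n) ≥ (π/2) · n^{1/2} for every positive integer n. -/
open MeasureTheory Filter Set Metric
open scoped ENNReal NNReal Topology

noncomputable section

namespace StackAux


/-- The parametrized circle around `q`, with vertical direction `ε` (`±1`). -/
def cc (q : Pt) (ε θ : ℝ) : Pt :=
  q + (WithLp.equiv 2 (Fin 2 → ℝ)).symm ![Real.cos θ, ε * Real.sin θ]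

lemma cc_apply0 (q : Pt) (ε θ : ℝ) : cc q ε θ 0 = q 0 + Real.cos θ := by simp [cc]

lemma cc_apply1 (q : Pt) (ε θ : ℝ) : cc q ε θ 1 = q 1 + ε * Real.sin θ := by simp [cc]

lemma dist_pt (x y : Pt) : dist x y = Real.sqrt ((x 0 - y 0)^2 + (x 1 - y 1)^2) := by
  rw [EuclideanSpace.dist_eq, Fin.sum_univ_two]
  simp [Real.dist_eq, sq_abs]

lemma cc_continuous (q : Pt) (ε : ℝ) : Continuous (cc q ε) := by
  refine continuous_const.add ?_
  refine Continuous.comp ?_ ?_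
  · exact PiLp.continuous_toLp 2 (fun _ : Fin 2 => ℝ)
  · refine continuous_pi fun i => ?_
    fin_cases i
    · simpa using Real.continuous_cos
    · exact continuous_const.mul Real.continuous_sin

lemma hausdorff_singleton_zero (x : Pt) : μH[1] ({x} : Set Pt) = 0 := by
  have h1 : ({x} : Set Pt) = (fun _ : Pt => x) '' {x} := by simp
  have h := (LipschitzWith.const (b := x) (α := Pt)).hausdorffMeasure_image_le
    (d := 1) zero_le_one {x}
  rw [← h1] at h
  simpa [ENNReal.zero_rpow_of_pos] using h

lemma ofReal_dist_le_hausdorff (f : ℝ → Pt) {a b : ℝ} (hab : a ≤ b)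
    (hf : ContinuousOn f (Set.Icc a b)) :
    ENNReal.ofReal (dist (f a) (f b)) ≤ μH[1] (f '' Set.Icc a b) := by
  rcases eq_or_ne (f a) (f b) with h | h
  · simp [h]
  set w : Pt := f b - f a with hw
  have hwne : ‖w‖ ≠ 0 := by
    simp only [hw, norm_ne_zero_iff, sub_ne_zero]
    exact (Ne.symm h)
  have hwpos : 0 < ‖w‖ := lt_of_le_of_ne (norm_nonneg _) (Ne.symm hwne)
  set v : Pt := ‖w‖⁻¹ • w with hv
  have hvnorm : ‖v‖ = 1 := by
    rw [hv, norm_smul, norm_inv, norm_norm, inv_mul_cancel₀ hwne]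
  set g : Pt → ℝ := fun x => (inner ℝ v x : ℝ) with hg
  have hglip : LipschitzWith 1 g := by
    have h1 : LipschitzWith ‖innerSL ℝ v‖₊ (innerSL ℝ v) := (innerSL ℝ v).lipschitz
    have h2 : ‖innerSL ℝ v‖₊ ≤ 1 := by
      rw [← NNReal.coe_le_coe, coe_nnnorm, innerSL_apply_norm, hvnorm]
      norm_num
    exact (h1.weaken h2)
  have hgf : g (f b) - g (f a) = ‖w‖ := by
    simp only [hg]
    rw [← inner_sub_right, ← hw, hv, real_inner_smul_left, real_inner_self_eq_norm_sq]
    field_simp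
  have hdistw : dist (f a) (f b) = ‖w‖ := by rw [dist_eq_norm, ← norm_neg]; congr 1; simp [hw]
  have hconn : IsPreconnected ((g ∘ f) '' Set.Icc a b) :=
    (isPreconnected_Icc).image _ (hglip.continuous.comp_continuousOn hf)
  have hsub : Set.Icc (g (f a)) (g (f b)) ⊆ (g ∘ f) '' Set.Icc a b := by
    apply hconn.Icc_subset
    · exact Set.mem_image_of_mem _ (Set.left_mem_Icc.2 hab)
    · exact Set.mem_image_of_mem _ (Set.right_mem_Icc.2 hab)
  have hmeas : μH[1] (Set.Icc (g (f a)) (g (f b))) = ENNReal.ofReal (dist (f a) (f b)) := by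
    rw [MeasureTheory.hausdorffMeasure_real, Real.volume_Icc, hdistw]
    rw [hgf]
  calc ENNReal.ofReal (dist (f a) (f b)) = μH[1] (Set.Icc (g (f a)) (g (f b))) := hmeas.symm
    _ ≤ μH[1] ((g ∘ f) '' Set.Icc a b) := measure_mono hsub
    _ = μH[1] (g '' (f '' Set.Icc a b)) := by rw [Set.image_comp]
    _ ≤ (1 : ℝ≥0) ^ (1:ℝ) * μH[1] (f '' Set.Icc a b) :=
        hglip.hausdorffMeasure_image_le zero_le_one _
    _ = μH[1] (f '' Set.Icc a b) := by simp

lemma union_Ico_pieces (m : ℕ) {δ : ℝ} (hδ : 0 ≤ δ) :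
    (⋃ t ∈ Finset.range m, Set.Ico ((t:ℝ)*δ) (((t:ℝ)+1)*δ)) = Set.Ico 0 ((m:ℝ)*δ) := by
  induction m with
  | zero => simp
  | succ k ih =>
    rw [Finset.range_add_one, Finset.set_biUnion_insert, ih, Set.union_comm,
      Set.Ico_union_Ico_eq_Ico (by positivity) (by push_cast; nlinarith)]
    push_cast
    ring_nf

lemma cc_chord (q : Pt) {ε : ℝ} (hε2 : ε^2 = 1) (a b : ℝ) :
    dist (cc q ε a) (cc q ε b) = Real.sqrt (2 - 2 * Real.cos (b - a)) := by
  rw [dist_pt, cc_apply0, cc_apply0, cc_apply1, cc_apply1]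
  congr 1
  have h1 := Real.sin_sq_add_cos_sq a
  have h2 := Real.sin_sq_add_cos_sq b
  have h3 := Real.cos_sub b a
  nlinarith [h1, h2, h3, hε2]

lemma real_bound (M : ℝ) (hM : 1 ≤ M) :
    Real.pi/2 - 1/M ≤ M * (2 * Real.sin (Real.pi/(4*M))) := by
  have hπ := Real.pi_pos
  have hMpos : 0 < M := by linarith
  set x := Real.pi/(4*M) with hx
  have hxpos : 0 < x := by positivity
  have hπ4 := Real.pi_le_four
  have hxle : x ≤ 1 := by
    rw [hx, div_le_one (by positivity)]; nlinarith
  have hsin := Real.sin_gt_sub_cube hxpos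
  have hπ2 : Real.pi^2 ≤ 16 := by nlinarith
  have hπ3 : Real.pi^3 ≤ 64 := by nlinarith
  have h2x : 2*M*x = Real.pi/2 := by rw [hx]; field_simp; ring
  have hcube : M * x^3 / 2 ≤ 1/M := by
    have heq : M * x^3/2 = Real.pi^3/(128*M^2) := by
      rw [hx]; field_simp; ring
    rw [heq, div_le_div_iff₀ (by positivity) hMpos]
    nlinarith
  nlinarith [mul_lt_mul_of_pos_left hsin (show (0:ℝ) < 2*M by positivity), h2x, hcube,
    mul_pos hMpos (pow_pos hxpos 3)]

set_option maxHeartbeats 1000000 in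
lemma arc_lower (q : Pt) {ε : ℝ} (hε : ε = 1 ∨ ε = -1) :
    ENNReal.ofReal (Real.pi / 2) ≤ μH[1] (cc q ε '' Set.Ico 0 (Real.pi / 2)) := by
  have hε2 : ε^2 = 1 := by rcases hε with h | h <;> rw [h] <;> norm_num
  have hπ := Real.pi_pos
  have hinj : Set.InjOn (cc q ε) (Set.Icc 0 (Real.pi/2)) := by
    intro a ha b hb h
    have h0 : cc q ε a 0 = cc q ε b 0 := by rw [h]
    rw [cc_apply0, cc_apply0] at h0
    have hc : Real.cos a = Real.cos b := by linarith
    exact Real.strictAntiOn_cos.injOn ⟨ha.1, by linarith [ha.2]⟩ ⟨hb.1, by linarith [hb.2]⟩ hc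
  have main : ∀ m : ℕ, 1 ≤ m →
      ENNReal.ofReal (Real.pi/2 - 1/m) ≤ μH[1] (cc q ε '' Set.Ico 0 (Real.pi/2)) := by
    intro m hm
    have hMpos : (0:ℝ) < m := by exact_mod_cast hm
    have hM1 : (1:ℝ) ≤ m := by exact_mod_cast hm
    set δ : ℝ := Real.pi/2/m with hδdef
    have hδpos : 0 < δ := by positivity
    have hmδ : (m:ℝ) * δ = Real.pi/2 := by rw [hδdef]; field_simp
    set S : ℕ → Set Pt := fun t => cc q ε '' Set.Ico ((t:ℝ)*δ) (((t:ℝ)+1)*δ) with hSdef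
    have hIccsub : ∀ t : ℕ, t < m → Set.Ico ((t:ℝ)*δ) (((t:ℝ)+1)*δ) ⊆ Set.Icc 0 (Real.pi/2) := by
      intro t ht x hx
      have ht' : ((t:ℝ)+1) ≤ m := by exact_mod_cast ht
      constructor
      · have : 0 ≤ (t:ℝ)*δ := by positivity
        linarith [hx.1]
      · nlinarith [hx.2, hδpos]
    have himg : cc q ε '' Set.Ico 0 (Real.pi/2) = ⋃ t ∈ Finset.range m, S t := by
      rw [← hmδ, ← union_Ico_pieces m hδpos.le, Set.image_iUnion₂]
    have hSsub : ∀ t : ℕ, t < m →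
        S t = (cc q ε '' Set.Icc ((t:ℝ)*δ) (((t:ℝ)+1)*δ)) \ {cc q ε (((t:ℝ)+1)*δ)} := by
      intro t ht
      have hend : ((t:ℝ)+1)*δ ∈ Set.Icc 0 (Real.pi/2) := by
        constructor
        · positivity
        · have ht' : ((t:ℝ)+1) ≤ m := by exact_mod_cast ht
          nlinarith
      ext x
      constructor
      · rintro ⟨θ, hθ, rfl⟩
        refine ⟨⟨θ, Set.Ico_subset_Icc_self hθ, rfl⟩, ?_⟩
        intro hxx
        have heq : θ = ((t:ℝ)+1)*δ :=
          hinj (hIccsub t ht hθ) hend (by simpa using hxx)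
        exact absurd heq (ne_of_lt hθ.2)
      · rintro ⟨⟨θ, hθ, rfl⟩, hne⟩
        refine ⟨θ, ⟨hθ.1, lt_of_le_of_ne hθ.2 ?_⟩, rfl⟩
        intro h
        exact hne (by rw [h]; simp)
    have hSmeas : ∀ t ∈ Finset.range m, MeasurableSet (S t) := by
      intro t ht
      rw [hSsub t (Finset.mem_range.1 ht)]
      exact ((isCompact_Icc.image (cc_continuous q ε)).isClosed.measurableSet).diff
        (measurableSet_singleton _)
    have hdisj : (↑(Finset.range m) : Set ℕ).PairwiseDisjoint S := by
      intro a ha b hb hab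
      simp only [Finset.coe_range, Set.mem_Iio] at ha hb
      refine Set.disjoint_left.2 ?_
      rintro x ⟨θ1, h1, rfl⟩ ⟨θ2, h2, heq⟩
      have hth : θ2 = θ1 := hinj (hIccsub b hb h2) (hIccsub a ha h1) heq
      subst hth
      rcases lt_or_gt_of_ne hab with h | h
      · have : ((a:ℝ)+1) ≤ b := by exact_mod_cast h
        nlinarith [h1.2, h2.1, hδpos]
      · have : ((b:ℝ)+1) ≤ a := by exact_mod_cast h
        nlinarith [h1.1, h2.2, hδpos]
    have hchordval : Real.sqrt (2 - 2*Real.cos δ) = 2 * Real.sin (δ/2) := by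
      have hδle : δ ≤ Real.pi/2 := by
        rw [hδdef]
        rw [div_le_iff₀ hMpos]
        nlinarith
      have hsnn : 0 ≤ Real.sin (δ/2) :=
        Real.sin_nonneg_of_nonneg_of_le_pi (by positivity) (by linarith)
      have hc2 : Real.cos δ = 2 * Real.cos (δ/2)^2 - 1 := by
        have := Real.cos_two_mul (δ/2)
        rw [show 2*(δ/2) = δ by ring] at this
        exact this
      have hsq : 2 - 2*Real.cos δ = (2 * Real.sin (δ/2))^2 := by
        have := Real.sin_sq_add_cos_sq (δ/2)
        nlinarith
      rw [hsq, Real.sqrt_sq (by positivity)]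
    have hlow : ∀ t ∈ Finset.range m, ENNReal.ofReal (2 * Real.sin (δ/2)) ≤ μH[1] (S t) := by
      intro t ht
      have ht' := Finset.mem_range.1 ht
      have hle : (t:ℝ)*δ ≤ ((t:ℝ)+1)*δ := by nlinarith
      have h1 := ofReal_dist_le_hausdorff (cc q ε) hle (cc_continuous q ε).continuousOn
      have hdval : dist (cc q ε ((t:ℝ)*δ)) (cc q ε (((t:ℝ)+1)*δ)) = 2 * Real.sin (δ/2) := by
        rw [cc_chord q hε2, show ((t:ℝ)+1)*δ - (t:ℝ)*δ = δ by ring, hchordval]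
      rw [hdval] at h1
      have h2 : μH[1] (cc q ε '' Set.Icc ((t:ℝ)*δ) (((t:ℝ)+1)*δ)) ≤ μH[1] (S t) := by
        have hsplit : cc q ε '' Set.Icc ((t:ℝ)*δ) (((t:ℝ)+1)*δ) ⊆
            S t ∪ {cc q ε (((t:ℝ)+1)*δ)} := by
          rw [hSsub t ht']
          intro x hx
          by_cases hxx : x ∈ ({cc q ε (((t:ℝ)+1)*δ)} : Set Pt)
          · exact Or.inr hxx
          · exact Or.inl ⟨hx, hxx⟩
        calc μH[1] (cc q ε '' Set.Icc ((t:ℝ)*δ) (((t:ℝ)+1)*δ))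
            ≤ μH[1] (S t ∪ {cc q ε (((t:ℝ)+1)*δ)}) := measure_mono hsplit
          _ ≤ μH[1] (S t) + μH[1] ({cc q ε (((t:ℝ)+1)*δ)} : Set Pt) := measure_union_le _ _
          _ = μH[1] (S t) := by rw [hausdorff_singleton_zero, add_zero]
      exact h1.trans h2
    have hreal : Real.pi/2 - 1/(m:ℝ) ≤ (m:ℝ) * (2 * Real.sin (δ/2)) := by
      have hx : δ/2 = Real.pi/(4*(m:ℝ)) := by rw [hδdef]; ring
      rw [hx]
      exact real_bound (m:ℝ) hM1
    calc ENNReal.ofReal (Real.pi/2 - 1/m)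
        ≤ ENNReal.ofReal ((m:ℝ) * (2 * Real.sin (δ/2))) := ENNReal.ofReal_le_ofReal hreal
      _ = (m : ℝ≥0∞) * ENNReal.ofReal (2 * Real.sin (δ/2)) := by
          rw [ENNReal.ofReal_mul (by positivity), ENNReal.ofReal_natCast]
      _ = ∑ _t ∈ Finset.range m, ENNReal.ofReal (2 * Real.sin (δ/2)) := by
          rw [Finset.sum_const, Finset.card_range, nsmul_eq_mul]
      _ ≤ ∑ t ∈ Finset.range m, μH[1] (S t) := Finset.sum_le_sum hlow
      _ = μH[1] (⋃ t ∈ Finset.range m, S t) := (measure_biUnion_finset hdisj hSmeas).symm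
      _ = μH[1] (cc q ε '' Set.Ico 0 (Real.pi/2)) := by rw [← himg]
  have htend : Filter.Tendsto (fun mm : ℕ => ENNReal.ofReal (Real.pi/2 - 1/mm)) Filter.atTop
      (𝓝 (ENNReal.ofReal (Real.pi/2))) := by
    have h0 : Filter.Tendsto (fun mm : ℕ => Real.pi/2 - 1/(mm:ℝ)) Filter.atTop
        (𝓝 (Real.pi/2 - 0)) :=
      tendsto_const_nhds.sub tendsto_one_div_atTop_nhds_zero_nat
    rw [sub_zero] at h0
    exact (ENNReal.continuous_ofReal.tendsto _).comp h0
  exact le_of_tendsto htend (Filter.eventually_atTop.2 ⟨1, main⟩)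


lemma extend_embedding {n k : ℕ} (hk : k ≤ n) (u : Fin k ↪ Fin n) :
    ∃ σ : Equiv.Perm (Fin n), ∀ i : Fin k, σ (Fin.castLE hk i) = u i := by
  classical
  let A : Set (Fin n) := Set.range u
  let e1 : Fin k ≃ ↥A := Equiv.ofInjective u u.injective
  have hAcard : Fintype.card ↥A = k :=
    (Fintype.card_congr e1.symm).trans (Fintype.card_fin k)
  have hcompl : Fintype.card ↥Aᶜ = n - k := by
    rw [Fintype.card_compl_set, hAcard, Fintype.card_fin]
  let e2 : Fin (n - k) ≃ ↥Aᶜ := (Fintype.equivFinOfCardEq hcompl).symm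
  let e3 : ↥A ⊕ ↥Aᶜ ≃ Fin n := Equiv.Set.sumCompl A
  have h1 : n = k + (n - k) := (Nat.add_sub_cancel' hk).symm
  refine ⟨(finCongr h1).trans (finSumFinEquiv.symm.trans ((Equiv.sumCongr e1 e2).trans e3)), ?_⟩
  intro i
  simp only [Equiv.trans_apply]
  have hcast : finCongr h1 (Fin.castLE hk i) = Fin.castAdd (n-k) i := by
    ext; simp
  rw [hcast, finSumFinEquiv_symm_apply_castAdd]
  simp only [Equiv.sumCongr_apply, Sum.map_inl, e3, Equiv.Set.sumCompl_apply_inl]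
  rfl


section ES
variable {α : Type*} [LinearOrder α]
open Function Finset

theorem my_erdos_szekeres {r s n : ℕ} {f : Fin n → α} (hn : r * s < n) (hf : Injective f) :
    (∃ t : Finset (Fin n), r < #t ∧ StrictMonoOn f ↑t) ∨
      ∃ t : Finset (Fin n), s < #t ∧ StrictAntiOn f ↑t := by
  -- Given an index `i`, produce the set of increasing (resp., decreasing) subsequences which ends
  -- at `i`.
  let inc_sequences_ending_in : Fin n → Finset (Finset (Fin n)) := fun i =>
    univ.powerset.filter fun t => Finset.max t = i ∧ StrictMonoOn f ↑t
  let dec_sequences_ending_in : Fin n → Finset (Finset (Fin n)) := fun i =>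
    univ.powerset.filter fun t => Finset.max t = i ∧ StrictAntiOn f ↑t
  -- The singleton sequence is in both of the above collections.
  -- (This is useful to show that the maximum length subsequence is at least 1, and that the set
  -- of subsequences is nonempty.)
  have inc_i : ∀ i, {i} ∈ inc_sequences_ending_in i := fun i => by
    simp [inc_sequences_ending_in, StrictMonoOn]
  have dec_i : ∀ i, {i} ∈ dec_sequences_ending_in i := fun i => by
    simp [dec_sequences_ending_in, StrictAntiOn]
  -- Define the pair of labels: at index `i`, the pair is the maximum length of an increasing
  -- subsequence ending at `i`, paired with the maximum length of a decreasing subsequence ending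
  -- at `i`.
  -- We call these labels `(a_i, b_i)`.
  let ab' : Fin n → ℕ × ℕ := by
    intro i
    apply
      (max' ((inc_sequences_ending_in i).image card) (Nonempty.image ⟨{i}, inc_i i⟩ _),
        max' ((dec_sequences_ending_in i).image card) (Nonempty.image ⟨{i}, dec_i i⟩ _))
  -- Porting note: it costs many resources to unfold `ab'` so we obscure the definition:
  generalize hab : ab' = ab
  -- It now suffices to show that one of the labels is 'big' somewhere. In particular, if the
  -- first in the pair is more than `r` somewhere, then we have an increasing subsequence in our
  -- set, and if the second is more than `s` somewhere, then we have a decreasing subsequence.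
  rsuffices ⟨i, hi⟩ : ∃ i, r < (ab i).1 ∨ s < (ab i).2
  · refine Or.imp ?_ ?_ hi
    on_goal 1 =>
      have : (ab i).1 ∈ image card (inc_sequences_ending_in i) := by
        simp only [← hab]; exact max'_mem _ (Nonempty.image ⟨{i}, inc_i i⟩ _)
    on_goal 2 =>
      have : (ab i).2 ∈ image card (dec_sequences_ending_in i) := by
        simp only [← hab]; exact max'_mem _ (Nonempty.image ⟨{i}, dec_i i⟩ _)
    all_goals
      intro hi
      rw [Finset.mem_image] at this
      obtain ⟨t, ht₁, ht₂⟩ := this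
      refine ⟨t, by rwa [ht₂], ?_⟩
      rw [mem_filter] at ht₁
      apply ht₁.2.2
  -- Show first that the pair of labels is unique.
  have : Injective ab := by
    simp only [← hab]
    apply Function.Injective.of_lt_imp_ne
    intro i j k q
    injection q with q₁ q₂
    -- We have two cases: `f i < f j` or `f j < f i`.
    -- In the former we'll show `a_i < a_j`, and in the latter we'll show `b_i < b_j`.
    cases lt_or_gt_of_ne fun _ => ne_of_lt ‹i < j› (hf ‹f i = f j›)
    on_goal 1 =>
      apply ne_of_lt _ q₁
      have : (ab' i).1 ∈ image card (inc_sequences_ending_in i) := by exact max'_mem _ (Nonempty.image ⟨{i}, inc_i i⟩ _)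
    on_goal 2 =>
      apply ne_of_lt _ q₂
      have : (ab' i).2 ∈ image card (dec_sequences_ending_in i) := by exact max'_mem _ (Nonempty.image ⟨{i}, dec_i i⟩ _)
    all_goals
      -- Reduce to showing there is a subsequence of length `a_i + 1` which ends at `j`.
      rw [Nat.lt_iff_add_one_le]
      apply le_max'
      rw [Finset.mem_image] at this ⊢
      -- In particular we take the subsequence `t` of length `a_i` which ends at `i`, by definition
      -- of `a_i`
      rcases this with ⟨t, ht₁, ht₂⟩
      rw [mem_filter] at ht₁
      -- Ensure `t` ends at `i`.
      have : t.max = i := by simp only [ht₁.2.1]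
      -- Now our new subsequence is given by adding `j` at the end of `t`.
      refine ⟨insert j t, ?_, ?_⟩
      -- First make sure it's valid, i.e., that this subsequence ends at `j` and is increasing
      · rw [mem_filter]
        refine ⟨?_, ?_, ?_⟩
        · rw [Finset.mem_powerset]; apply Finset.subset_univ
        -- It ends at `j` since `i < j`.
        · convert max_insert (a := j) (s := t)
          rw [ht₁.2.1, max_eq_left]
          apply WithBot.coe_le_coe.mpr (le_of_lt ‹i < j›)
        -- To show it's increasing (i.e., `f` is monotone increasing on `t.insert j`), we do cases
        -- on what the possibilities could be - either in `t` or equals `j`.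
        simp only [StrictMonoOn, StrictAntiOn, coe_insert, Set.mem_insert_iff, mem_coe]
        -- Most of the cases are just bashes.
        rintro x ⟨rfl | _⟩ y ⟨rfl | _⟩ _
        · apply (irrefl _ ‹j < j›).elim
        · exfalso
          apply not_le_of_gt (_root_.trans ‹i < j› ‹j < y›) (le_max_of_eq ‹y ∈ t› ‹t.max = i›)
        · first
          | apply lt_of_le_of_lt _ ‹f i < f j›
          | apply lt_of_lt_of_le ‹f j < f i› _
          rcases lt_or_eq_of_le (le_max_of_eq ‹x ∈ t› ‹t.max = i›) with (_ | rfl)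
          · apply le_of_lt (ht₁.2.2 ‹x ∈ t› (mem_of_max ‹t.max = i›) ‹x < i›)
          · rfl
        · apply ht₁.2.2 ‹x ∈ t› ‹y ∈ t› ‹x < y›
      -- Finally show that this new subsequence is one longer than the old one.
      · rw [card_insert_of_notMem, ht₂]
        intro
        apply not_le_of_gt ‹i < j› (le_max_of_eq ‹j ∈ t› ‹t.max = i›)
  -- Finished both goals!
  -- Now that we have uniqueness of each label, it remains to do some counting to finish off.
  -- Suppose all the labels are small.
  by_contra! q
  -- Then the labels `(a_i, b_i)` all fit in the following set: `{ (x,y) | 1 ≤ x ≤ r, 1 ≤ y ≤ s }`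
  let ran : Finset (ℕ × ℕ) := (range r).image Nat.succ ×ˢ (range s).image Nat.succ
  -- which we prove here.
  have : Finset.image ab Finset.univ ⊆ ran := by
    -- First some logical shuffling
    rintro ⟨x₁, x₂⟩
    simp only [ran, Finset.mem_image, exists_prop, Finset.mem_range, Finset.mem_univ, Finset.mem_product, true_and,
      Prod.ext_iff]
    rintro ⟨i, rfl, rfl⟩
    specialize q i
    -- Show `1 ≤ a_i` and `1 ≤ b_i`, which is easy from the fact that `{i}` is an increasing and
    -- decreasing subsequence which we did right near the top.
    have z : 1 ≤ (ab i).1 ∧ 1 ≤ (ab i).2 := by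
      simp only [← hab]
      constructor <;>
        · apply le_max'
          rw [Finset.mem_image]
          exact ⟨{i}, by solve_by_elim, Finset.card_singleton i⟩
    -- Need to get `a_i ≤ r`, here phrased as: there is some `a < r` with `a+1 = a_i`.
    exact ⟨⟨(ab i).1 - 1, by omega⟩, (ab i).2 - 1, by omega⟩
  -- To get our contradiction, it suffices to prove `n ≤ r * s`
  apply not_le_of_gt hn
  -- Which follows from considering the cardinalities of the subset above, since `ab` is injective.
  simpa [ran, Nat.succ_injective, Finset.card_image_of_injective, ‹Injective ab›] using Finset.card_le_card this


end ES

end StackAux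


open StackAux in
set_option maxHeartbeats 2000000 in
/-- every set of `n` distinct points admits a stacking order with visible
perimeter at least `(π/2)·⌈n^{1/2}⌉`; consequently `v(n) ≥ (π/2)·n^{1/2}`. -/
theorem exists_stacking_order_vis_ge_sqrt :
    (∀ (n : ℕ) (p : Fin n → Pt), Function.Injective p →
      ∃ σ : Equiv.Perm (Fin n),
        ENNReal.ofReal (Real.pi / 2 * (⌈Real.sqrt n⌉₊ : ℝ)) ≤ vis (p ∘ σ)) ∧
    ∀ n : ℕ, 0 < n → ENNReal.ofReal (Real.pi / 2 * Real.sqrt n) ≤ vinf n := by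
  have main : ∀ (n : ℕ) (p : Fin n → Pt), Function.Injective p →
      ∃ σ : Equiv.Perm (Fin n),
        ENNReal.ofReal (Real.pi / 2 * (⌈Real.sqrt n⌉₊ : ℝ)) ≤ vis (p ∘ σ) := by
    intro n p hp
    rcases Nat.eq_zero_or_pos n with hn | hn
    · refine ⟨Equiv.refl _, ?_⟩
      subst hn
      norm_num [Real.sqrt_zero]
    set k := ⌈Real.sqrt n⌉₊ with hkdef
    have hnR : (0:ℝ) < n := by exact_mod_cast hn
    have hkpos : 0 < k := Nat.ceil_pos.2 (Real.sqrt_pos.2 hnR)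
    have hklt : (k-1)*(k-1) < n := by
      have h1 : ((k-1 : ℕ):ℝ) < Real.sqrt n := Nat.lt_ceil.1 (by omega)
      have h2 : (((k-1)*(k-1) : ℕ) : ℝ) < (n:ℝ) := by
        push_cast
        nlinarith [Real.sq_sqrt hnR.le, Real.sqrt_nonneg (n:ℝ),
          Nat.cast_nonneg (α := ℝ) (k-1)]
      exact_mod_cast h2
    set f : Fin n → ℝ ×ₗ ℝ := fun i => toLex (p i 0, p i 1) with hfdef
    set P : Fin n → Pt := p ∘ ⇑(Tuple.sort f) with hPdef
    have hPinj : Function.Injective P := hp.comp (Tuple.sort f).injective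
    have hsorted : ∀ i j : Fin n, i ≤ j → P i 0 ≤ P j 0 := by
      intro i j hij
      have h := Tuple.monotone_sort f hij
      rcases (Prod.Lex.le_iff).1 h with h' | h'
      · exact le_of_lt h'
      · exact le_of_eq h'.1
    set g : Fin n → ℝ ×ₗ ℝ := fun i => toLex (P i 1, P i 0) with hgdef
    have hginj : Function.Injective g := by
      intro i j hij
      apply hPinj
      have h1 : P i 1 = P j 1 := congrArg (fun x => (ofLex x).1) hij
      have h2 : P i 0 = P j 0 := congrArg (fun x => (ofLex x).2) hij
      apply PiLp.ext; intro c
      fin_cases c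
      · exact h2
      · exact h1
    have hchain : ∃ ε : ℝ, (ε = 1 ∨ ε = -1) ∧ ∃ t : Finset (Fin n), t.card = k ∧
        ∀ a ∈ t, ∀ b ∈ t, a < b → P a 0 ≤ P b 0 ∧ ε * P a 1 ≤ ε * P b 1 := by
      obtain ⟨t0, ht0card, hmono⟩ | ⟨t0, ht0card, hanti⟩ :=
        my_erdos_szekeres (r := k-1) (s := k-1) hklt hginj
      · obtain ⟨t, hsub, htcard⟩ := Finset.exists_subset_card_eq
          (show k ≤ t0.card by omega)
        refine ⟨1, Or.inl rfl, t, htcard, ?_⟩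
        intro a ha b hb hab
        refine ⟨hsorted a b hab.le, ?_⟩
        have hlt := hmono (hsub ha) (hsub hb) hab
        rcases (Prod.Lex.lt_iff).1 hlt with h' | h'
        · have : P a 1 < P b 1 := h'
          simpa using this.le
        · have : P a 1 = P b 1 := h'.1
          simp [this]
      · obtain ⟨t, hsub, htcard⟩ := Finset.exists_subset_card_eq
          (show k ≤ t0.card by omega)
        refine ⟨-1, Or.inr rfl, t, htcard, ?_⟩
        intro a ha b hb hab
        refine ⟨hsorted a b hab.le, ?_⟩
        have hlt := hanti (hsub ha) (hsub hb) hab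
        rcases (Prod.Lex.lt_iff).1 hlt with h' | h'
        · have : P b 1 < P a 1 := h'
          linarith
        · have h1 : P b 1 = P a 1 := h'.1
          have h2 : P b 0 < P a 0 := h'.2
          have := hsorted a b hab.le
          linarith
    obtain ⟨ε, hε, t, htcard, hch⟩ := hchain
    have hε2 : ε^2 = 1 := by rcases hε with h|h <;> rw [h] <;> norm_num
    have hkn : k ≤ n := by
      have h := Finset.card_le_univ t
      rw [htcard] at h
      simpa using h
    set φ := t.orderIsoOfFin htcard with hφdef
    have huinj : Function.Injective (fun i : Fin k => Tuple.sort f ↑(φ i)) := by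
      intro a b hab
      have h1 : (↑(φ a) : Fin n) = ↑(φ b) := (Tuple.sort f).injective hab
      exact φ.injective (Subtype.coe_injective h1)
    obtain ⟨σ, hσ⟩ := extend_embedding hkn ⟨fun i => Tuple.sort f ↑(φ i), huinj⟩
    refine ⟨σ, ?_⟩
    have hterm : ∀ i : Fin k,
        ENNReal.ofReal (Real.pi/2) ≤
        μH[1] {x : Pt | dist x ((p ∘ σ) (Fin.castLE hkn i)) = 1 ∧
          ∀ J : Fin n, J < Fin.castLE hkn i → 1 ≤ dist x ((p ∘ σ) J)} := by
      intro i
      have hqeq : (p ∘ σ) (Fin.castLE hkn i) = P ↑(φ i) := by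
        simp only [Function.comp_apply, hσ i, Function.Embedding.coeFn_mk, hPdef]
      have hsubset : cc (P ↑(φ i)) ε '' Set.Ico 0 (Real.pi/2) ⊆
          {x : Pt | dist x ((p ∘ σ) (Fin.castLE hkn i)) = 1 ∧
            ∀ J : Fin n, J < Fin.castLE hkn i → 1 ≤ dist x ((p ∘ σ) J)} := by
        rintro x ⟨θ, hθ, rfl⟩
        have hπ := Real.pi_pos
        have hcosnn : 0 ≤ Real.cos θ :=
          Real.cos_nonneg_of_mem_Icc ⟨by linarith [hθ.1], hθ.2.le⟩
        have hsinnn : 0 ≤ Real.sin θ :=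
          Real.sin_nonneg_of_nonneg_of_le_pi hθ.1 (by linarith [hθ.2])
        have hs := Real.sin_sq_add_cos_sq θ
        constructor
        · rw [hqeq, dist_pt, cc_apply0, cc_apply1]
          have hval : (P ↑(φ i) 0 + Real.cos θ - P ↑(φ i) 0)^2 +
              (P ↑(φ i) 1 + ε*Real.sin θ - P ↑(φ i) 1)^2 = 1 := by
            have hεs : (ε*Real.sin θ)^2 = Real.sin θ^2 := by
              rw [mul_pow, hε2, one_mul]
            ring_nf
            ring_nf at hεs
            nlinarith [hεs, hs]
          rw [hval, Real.sqrt_one]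
        · intro J hJ
          have hik : (i : ℕ) < k := i.2
          have hJk : (J : ℕ) < k := by
            have := hJ
            rw [Fin.lt_def] at this
            simp only [Fin.coe_castLE] at this
            omega
          set j : Fin k := ⟨J.1, hJk⟩ with hjdef
          have hJeq : J = Fin.castLE hkn j := by
            apply Fin.ext
            simp [hjdef]
          have hji : j < i := by
            rw [Fin.lt_def]
            have := hJ
            rw [Fin.lt_def] at this
            simpa [hjdef] using this
          have hPJ : (p ∘ σ) J = P ↑(φ j) := by
            rw [hJeq]
            simp only [Function.comp_apply, hσ j, Function.Embedding.coeFn_mk, hPdef]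
          have hφji : (↑(φ j) : Fin n) < ↑(φ i) := φ.strictMono hji
          have hc := hch ↑(φ j) (φ j).2 ↑(φ i) (φ i).2 hφji
          rw [hPJ, dist_pt, cc_apply0, cc_apply1]
          have h1 : 1 ≤ (P ↑(φ i) 0 + Real.cos θ - P ↑(φ j) 0)^2 +
              (P ↑(φ i) 1 + ε*Real.sin θ - P ↑(φ j) 1)^2 := by
            have hεs : (ε*Real.sin θ)^2 = Real.sin θ^2 := by
              rw [mul_pow, hε2, one_mul]
            have hA : 0 ≤ (P ↑(φ i) 0 - P ↑(φ j) 0) * Real.cos θ :=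
              mul_nonneg (by linarith [hc.1]) hcosnn
            have hB : 0 ≤ (ε * P ↑(φ i) 1 - ε * P ↑(φ j) 1) * Real.sin θ :=
              mul_nonneg (by linarith [hc.2]) hsinnn
            nlinarith [hεs, hs, hA, hB,
              sq_nonneg (P ↑(φ i) 0 - P ↑(φ j) 0), sq_nonneg (P ↑(φ i) 1 - P ↑(φ j) 1)]
          calc (1:ℝ) = Real.sqrt 1 := Real.sqrt_one.symm
            _ ≤ _ := Real.sqrt_le_sqrt h1
      calc ENNReal.ofReal (Real.pi/2)
          ≤ μH[1] (cc (P ↑(φ i)) ε '' Set.Ico 0 (Real.pi/2)) := arc_lower _ hε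
        _ ≤ _ := measure_mono hsubset
    rw [vis]
    calc ENNReal.ofReal (Real.pi/2 * (k:ℝ))
        = ∑ _i : Fin k, ENNReal.ofReal (Real.pi/2) := by
          rw [Finset.sum_const, Finset.card_univ, Fintype.card_fin, nsmul_eq_mul,
            ENNReal.ofReal_mul (by positivity), ENNReal.ofReal_natCast, mul_comm]
      _ ≤ ∑ i : Fin k, μH[1] {x : Pt | dist x ((p ∘ σ) (Fin.castLE hkn i)) = 1 ∧
            ∀ J : Fin n, J < Fin.castLE hkn i → 1 ≤ dist x ((p ∘ σ) J)} :=
          Finset.sum_le_sum (fun i _ => hterm i)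
      _ = ∑ I ∈ Finset.univ.map (Fin.castLEEmb hkn),
            μH[1] {x : Pt | dist x ((p ∘ σ) I) = 1 ∧
              ∀ J : Fin n, J < I → 1 ≤ dist x ((p ∘ σ) J)} := by
          rw [Finset.sum_map]
          rfl
      _ ≤ ∑ I : Fin n, μH[1] {x : Pt | dist x ((p ∘ σ) I) = 1 ∧
            ∀ J : Fin n, J < I → 1 ≤ dist x ((p ∘ σ) J)} :=
          Finset.sum_le_sum_of_subset (Finset.subset_univ _)
  refine ⟨main, fun n hn => ?_⟩
  rw [vinf]
  refine le_iInf fun p => le_iInf fun hp => ?_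
  obtain ⟨σ, hσ⟩ := main n p hp
  refine le_iSup_of_le σ (le_trans (ENNReal.ofReal_le_ofReal ?_) hσ)
  exact mul_le_mul_of_nonneg_left (Nat.le_ceil _) (by positivity)
end
end
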